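/- arXiv:2012.11813 — 8 statements merged into one kernel-verified Lean document; each statement's English description precedes it below -/
import Mathlib

section
/- Suppose (f_n)_{n≥1} is a sequence of sequences of nonnegative integers (coefficient sequences of polynomials) satisfying, for n ≥ 4, the shifted recurrence a_{n,0} = 0 and a_{n,j} = a_{n-1,j-1} + a_{n-2,j-1} + a_{n-3,j-1} for j ≥ 1 (i.e., f_n = x(f_{n-1}+f_{n-2}+f_{n-3})). If for n = 1,2,3,4 each f_n is unimodal with mode m_n and 0 ≤ m_n − m_{n-1} ≤ 1 for n = 2,3,4, then for every n ≥ 1, f_n is unimodal with mode m_n satisfying 0 ≤ m_n − m_{n-1} ≤ 1 for n ≥ 2. -/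
/-- `a` is unimodal with mode `m`. -/
def UnimodalWithMode (a : ℕ → ℕ) (m : ℕ) : Prop :=
  (∀ j, j < m → a j ≤ a (j + 1)) ∧ (∀ j, m ≤ j → a (j + 1) ≤ a j)

/-- Key step: if `a = x(b+c+d)` (as the recurrence says), with the four sequences
unimodal with modes `q3 ≤ q2 ≤ q1 ≤ q0 ≤ q2 + 2`, then `a + b + c` is increasing
strictly below `q0 - 1` and decreasing from `q0` on. -/
lemma unimodal_step (a b c d : ℕ → ℕ) (q0 q1 q2 q3 : ℕ)
    (ha : UnimodalWithMode a q0) (hb : UnimodalWithMode b q1)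
    (hc : UnimodalWithMode c q2) (hd : UnimodalWithMode d q3)
    (h32 : q3 ≤ q2) (h21 : q2 ≤ q1) (h10 : q1 ≤ q0) (h02 : q0 ≤ q2 + 2)
    (harec : ∀ j, 1 ≤ j → a j = b (j - 1) + c (j - 1) + d (j - 1)) :
    (∀ j, j + 1 < q0 → a j + b j + c j ≤ a (j + 1) + b (j + 1) + c (j + 1)) ∧
    (∀ j, q0 ≤ j → a (j + 1) + b (j + 1) + c (j + 1) ≤ a j + b j + c j) := by
  constructor
  · intro j hj
    by_cases hcase : j < q2
    · exact add_le_add (add_le_add (ha.1 j (by omega)) (hb.1 j (by omega))) (hc.1 j hcase)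
    · push_neg at hcase
      have e1 : a (j + 1) = b j + c j + d j := by
        have h := harec (j + 1) (by omega)
        simpa using h
      have e2 : a (j + 2) = b (j + 1) + c (j + 1) + d (j + 1) := by
        have h := harec (j + 2) (by omega)
        simpa using h
      have hmono1 : a j ≤ a (j + 1) := ha.1 j (by omega)
      have hmono2 : a (j + 1) ≤ a (j + 2) := ha.1 (j + 1) (by omega)
      have hdj : d (j + 1) ≤ d j := hd.2 j (le_trans h32 hcase)
      omega
  · intro j hj
    exact add_le_add (add_le_add (ha.2 j hj) (hb.2 j (le_trans h10 hj)))
      (hc.2 j (le_trans (h21.trans h10) hj))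

/-- For a sequence of coefficient sequences satisfying `f_n = x(f_{n-1}+f_{n-2}+f_{n-3})`
for `n ≥ 4`, if `f_1,…,f_4` are unimodal with modes whose consecutive differences lie in
`{0,1}`, then every `f_n` (`n ≥ 1`) is unimodal with modes satisfying the same
difference condition. -/
theorem stmt_2 (f : ℕ → ℕ → ℕ)
    (hrec : ∀ n, 4 ≤ n → f n 0 = 0 ∧
      ∀ j, 1 ≤ j → f n j = f (n - 1) (j - 1) + f (n - 2) (j - 1) + f (n - 3) (j - 1))
    (m : ℕ → ℕ)
    (hbase : ∀ n, 1 ≤ n → n ≤ 4 → UnimodalWithMode (f n) (m n))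
    (hdiff : ∀ n, 2 ≤ n → n ≤ 4 → m (n - 1) ≤ m n ∧ m n ≤ m (n - 1) + 1) :
    ∃ M : ℕ → ℕ, (∀ n, 1 ≤ n → n ≤ 4 → M n = m n) ∧
      ∀ n, 1 ≤ n → UnimodalWithMode (f n) (M n) ∧
        (2 ≤ n → M (n - 1) ≤ M n ∧ M n ≤ M (n - 1) + 1) := by
  set M : ℕ → ℕ := fun n => Nat.rec (m 0)
    (fun k Mk => if k + 1 ≤ 4 then m (k + 1)
      else if 1 ≤ Mk ∧ f k Mk + f (k - 1) Mk + f (k - 2) Mk ≤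
          f k (Mk - 1) + f (k - 1) (Mk - 1) + f (k - 2) (Mk - 1) then Mk else Mk + 1) n
    with hMdef
  have hMsucc : ∀ k : ℕ, M (k + 1) = if k + 1 ≤ 4 then m (k + 1)
      else if 1 ≤ M k ∧ f k (M k) + f (k - 1) (M k) + f (k - 2) (M k) ≤
          f k (M k - 1) + f (k - 1) (M k - 1) + f (k - 2) (M k - 1) then M k else M k + 1 := by
    intro k
    simp only [hMdef]
  have hMbase : ∀ n, 1 ≤ n → n ≤ 4 → M n = m n := by
    intro n h1 h4
    interval_cases n <;> simp only [hMdef] <;> rfl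
  have hchain : ∀ n, 2 ≤ n → M (n - 1) ≤ M n ∧ M n ≤ M (n - 1) + 1 := by
    intro n h2
    by_cases h4 : n ≤ 4
    · rw [hMbase n (by omega) h4, hMbase (n - 1) (by omega) (by omega)]
      exact hdiff n h2 h4
    · push_neg at h4
      obtain ⟨k, rfl⟩ : ∃ k, n = k + 1 := ⟨n - 1, by omega⟩
      rw [hMsucc k, if_neg (by omega)]
      simp only [Nat.add_sub_cancel]
      split <;> omega
  have huni : ∀ n, 1 ≤ n → UnimodalWithMode (f n) (M n) := by
    intro n
    induction n using Nat.strong_induction_on with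
    | _ n ih =>
      intro h1
      by_cases h4 : n ≤ 4
      · rw [hMbase n h1 h4]
        exact hbase n h1 h4
      · push_neg at h4
        obtain ⟨k, rfl⟩ : ∃ k, n = k + 1 := ⟨n - 1, by omega⟩
        have hk4 : 4 ≤ k := by omega
        have u0 := ih k (by omega) (by omega)
        have u1 := ih (k - 1) (by omega) (by omega)
        have u2 := ih (k - 2) (by omega) (by omega)
        have u3 := ih (k - 3) (by omega) (by omega)
        have c0 := hchain k (by omega)
        have c1 := hchain (k - 1) (by omega)
        have c2 := hchain (k - 2) (by omega)
        rw [show k - 1 - 1 = k - 2 from by omega] at c1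
        rw [show k - 2 - 1 = k - 3 from by omega] at c2
        obtain ⟨hk0, hkrec⟩ := hrec k hk4
        obtain ⟨hk10, hk1rec⟩ := hrec (k + 1) (by omega)
        have hfs : ∀ j, f (k + 1) (j + 1) = f k j + f (k - 1) j + f (k - 2) j := by
          intro j
          have h := hk1rec (j + 1) (by omega)
          rw [show k + 1 - 1 = k from by omega, show k + 1 - 2 = k - 1 from by omega,
            show k + 1 - 3 = k - 2 from by omega] at h
          simpa using h
        obtain ⟨INC, DEC⟩ := unimodal_step (f k) (f (k - 1)) (f (k - 2)) (f (k - 3))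
          (M k) (M (k - 1)) (M (k - 2)) (M (k - 3)) u0 u1 u2 u3
          c2.1 c1.1 c0.1 (by omega) hkrec
        rw [hMsucc k, if_neg (by omega)]
        by_cases hco : 1 ≤ M k ∧ f k (M k) + f (k - 1) (M k) + f (k - 2) (M k) ≤
            f k (M k - 1) + f (k - 1) (M k - 1) + f (k - 2) (M k - 1)
        · rw [if_pos hco]
          constructor
          · intro j hj
            cases j with
            | zero => rw [hk10]; exact Nat.zero_le _
            | succ i =>
              rw [hfs i, hfs (i + 1)]
              exact INC i hj
          · intro j hj
            obtain ⟨hq1, hle⟩ := hco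
            cases j with
            | zero => omega
            | succ i =>
              rw [hfs i, hfs (i + 1)]
              by_cases hMi : M k ≤ i
              · exact DEC i hMi
              · have e : M k = i + 1 := by omega
                rw [e] at hle
                simpa using hle
        · rw [if_neg hco]
          constructor
          · intro j hj
            cases j with
            | zero => rw [hk10]; exact Nat.zero_le _
            | succ i =>
              rw [hfs i, hfs (i + 1)]
              by_cases hlt : i + 1 < M k
              · exact INC i hlt
              · have e : M k = i + 1 := by omega
                rw [e] at hco
                simp only [Nat.add_sub_cancel] at hco
                have hnot : ¬ (f k (i + 1) + f (k - 1) (i + 1) + f (k - 2) (i + 1) ≤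
                    f k i + f (k - 1) i + f (k - 2) i) :=
                  fun hcontra => hco ⟨by omega, hcontra⟩
                omega
          · intro j hj
            cases j with
            | zero => omega
            | succ i =>
              rw [hfs i, hfs (i + 1)]
              exact DEC i (by omega)
  exact ⟨M, hMbase, fun n hn => ⟨huni n hn, fun h2 => hchain n h2⟩⟩
end

section
/- For every n ≥ 3, the domination polynomial of the path P_n is unimodal. -/
/-- The number of dominating sets of cardinality `i` in `G`. -/
noncomputable def domCount {V : Type*} (G : SimpleGraph V) (i : ℕ) : ℕ :=
  Nat.card {s : Finset V // s.card = i ∧ ∀ v, v ∈ s ∨ ∃ u ∈ s, G.Adj u v}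

namespace DomPath

open SimpleGraph Finset

def vv : ℕ → ℤ → ℕ
  | 0, t => if t = 0 ∨ t = 1 then 1 else 0
  | m+1, t => vv m t + vv m (t-1) + vv m (t-2)

def uu (m : ℕ) (t : ℤ) : ℕ := vv m t + vv m (t-1)

lemma vv_neg : ∀ (m : ℕ) (t : ℤ), t < 0 → vv m t = 0 := by
  intro m
  induction m with
  | zero => intro t ht; simp only [vv]; rw [if_neg]; omega
  | succ m ih => intro t ht; simp only [vv]; rw [ih t ht, ih (t-1) (by omega), ih (t-2) (by omega)]

lemma vv_big : ∀ (m : ℕ) (t : ℤ), 2*m+1 < t → vv m t = 0 := by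
  intro m
  induction m with
  | zero => intro t ht; simp only [vv]; rw [if_neg]; omega
  | succ m ih =>
      intro t ht
      simp only [vv]
      rw [ih t (by push_cast; push_cast at ht; omega), ih (t-1) (by push_cast; push_cast at ht; omega),
        ih (t-2) (by push_cast; push_cast at ht; omega)]

lemma vv_pos : ∀ (m : ℕ) (t : ℤ), 0 ≤ t → t ≤ 2*m+1 → 0 < vv m t := by
  intro m
  induction m with
  | zero => intro t h1 h2; simp only [vv]; rw [if_pos]; · omega
            · push_cast at h2; omega
  | succ m ih =>
      intro t h1 h2
      simp only [vv]
      push_cast at h2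
      rcases le_or_gt t (2*m+1) with h | h
      · have := ih t h1 (by push_cast; omega); omega
      · have := ih (t-2) (by omega) (by push_cast; omega); omega

lemma uu_neg (m : ℕ) (t : ℤ) (ht : t < 0) : uu m t = 0 := by
  simp [uu, vv_neg m t ht, vv_neg m (t-1) (by omega)]

lemma uu_big (m : ℕ) (t : ℤ) (ht : 2*m+2 < t) : uu m t = 0 := by
  simp [uu, vv_big m t (by omega), vv_big m (t-1) (by omega)]

lemma uu_pos (m : ℕ) (t : ℤ) (h1 : 0 ≤ t) (h2 : t ≤ 2*m+2) : 0 < uu m t := by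
  rcases le_or_gt t (2*m+1) with h | h
  · have := vv_pos m t h1 h; simp only [uu]; omega
  · have := vv_pos m (t-1) (by omega) (by omega); simp only [uu]; omega

lemma uu_rec (m : ℕ) (t : ℤ) : uu (m+1) t = uu m t + uu m (t-1) + uu m (t-2) := by
  simp only [uu, vv]
  ring_nf

lemma spread : ∀ (m : ℕ) (p q : ℤ), p ≤ q → uu m (p-1) * uu m (q+1) ≤ uu m p * uu m q := by
  intro m
  induction m with
  | zero =>
      intro p q hpq
      rcases lt_or_ge (p-1) 0 with h | h
      · rw [uu_neg 0 _ h]; simp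
      rcases lt_or_ge (2*(0:ℕ)+2 : ℤ) (q+1) with h2 | h2
      · rw [uu_big 0 _ h2]; simp
      -- now 1 ≤ p ≤ q ≤ 1, so p = q = 1
      have hp : p = 1 := by omega
      have hq : q = 1 := by omega
      subst hp; subst hq
      norm_num [uu, vv]
  | succ m ih =>
      intro p q hpq
      -- widening lemma
      have widen : ∀ (d : ℕ) (a b : ℤ), a ≤ b → uu m (a-d) * uu m (b+d) ≤ uu m a * uu m b := by
        intro d
        induction d with
        | zero => intro a b _; simp
        | succ d ihd =>
            intro a b hab
            have h1 : uu m (a - 1 - d) * uu m (b + 1 + d) ≤ uu m (a-1) * uu m (b+1) :=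
              ihd (a-1) (b+1) (by omega)
            have h2 : uu m (a-1) * uu m (b+1) ≤ uu m a * uu m b := ih a b hab
            have e1 : a - ((d+1 : ℕ) : ℤ) = a - 1 - d := by push_cast; ring
            have e2 : b + ((d+1 : ℕ) : ℤ) = b + 1 + d := by push_cast; ring
            rw [e1, e2]
            exact le_trans h1 h2
      have widen' : ∀ (a' b' a b : ℤ), a' ≤ a → a' ≤ b → a ≤ b' → b ≤ b' → a + b = a' + b' →
          uu m a' * uu m b' ≤ uu m a * uu m b := by
        intro a' b' a b h1 h2 h3 h4 h5
        rcases le_total a b with hab | hba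
        · have hd : ∃ d : ℕ, (d:ℤ) = a - a' := ⟨(a - a').toNat, by omega⟩
          obtain ⟨d, hd⟩ := hd
          have := widen d a b hab
          have e1 : a - d = a' := by omega
          have e2 : b + d = b' := by omega
          rwa [e1, e2] at this
        · have hd : ∃ d : ℕ, (d:ℤ) = b - a' := ⟨(b - a').toNat, by omega⟩
          obtain ⟨d, hd⟩ := hd
          have := widen d b a hba
          have e1 : b - d = a' := by omega
          have e2 : a + d = b' := by omega
          rw [e1, e2] at this
          calc uu m a' * uu m b' = uu m b' * uu m a' := by ring
            _ ≤ uu m b * uu m a := by rw [mul_comm (uu m b) (uu m a)] at this; linarith [this]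
            _ = uu m a * uu m b := by ring
      -- expand
      rw [uu_rec, uu_rec, uu_rec, uu_rec]
      have h1 : uu m (p-1) * uu m (q+1) ≤ uu m p * uu m q := ih p q hpq
      have h2 : uu m (p-2) * uu m (q+1) ≤ uu m p * uu m (q-1) :=
        widen' (p-2) (q+1) p (q-1) (by omega) (by omega) (by omega) (by omega) (by ring)
      have h3 : uu m (p-3) * uu m (q+1) ≤ uu m p * uu m (q-2) :=
        widen' (p-3) (q+1) p (q-2) (by omega) (by omega) (by omega) (by omega) (by ring)
      have h4 : uu m (p-3) * uu m q ≤ uu m (p-1) * uu m (q-2) :=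
        widen' (p-3) q (p-1) (q-2) (by omega) (by omega) (by omega) (by omega) (by ring)
      have h5 : uu m (p-3) * uu m (q-1) ≤ uu m (p-2) * uu m (q-2) :=
        widen' (p-3) (q-1) (p-2) (q-2) (by omega) (by omega) (by omega) (by omega) (by ring)
      have e1 : p - 1 - 1 = p - 2 := by ring
      have e2 : p - 1 - 2 = p - 3 := by ring
      have e3 : q + 1 - 1 = q := by ring
      have e4 : q + 1 - 2 = q - 1 := by ring
      rw [e1, e2, e3, e4]
      nlinarith [h1, h2, h3, h4, h5]

lemma rowlem (m : ℕ) (t : ℤ) (hpos : 0 < uu m t)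
    (H : uu m (t-1) + uu m (t-2) + uu m (t-3) ≤ uu m t) :
    uu m (t-2) + uu m (t-3) + uu m (t-4) ≤ uu m (t-1) := by
  have s1 : uu m (t-2) * uu m t ≤ uu m (t-1) * uu m (t-1) := by
    have := spread m (t-1) (t-1) le_rfl
    calc uu m (t-2) * uu m t = uu m (t-1-1) * uu m (t-1+1) := by ring_nf
      _ ≤ uu m (t-1) * uu m (t-1) := this
  have s2 : uu m (t-3) * uu m t ≤ uu m (t-2) * uu m (t-1) := by
    have := spread m (t-2) (t-1) (by omega)
    calc uu m (t-3) * uu m t = uu m (t-2-1) * uu m (t-1+1) := by ring_nf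
      _ ≤ uu m (t-2) * uu m (t-1) := this
  have s3 : uu m (t-4) * uu m t ≤ uu m (t-3) * uu m (t-1) := by
    have := spread m (t-3) (t-1) (by omega)
    calc uu m (t-4) * uu m t = uu m (t-3-1) * uu m (t-1+1) := by ring_nf
      _ ≤ uu m (t-3) * uu m (t-1) := this
  have key : uu m t * (uu m (t-2) + uu m (t-3) + uu m (t-4)) ≤ uu m t * uu m (t-1) := by
    have : uu m (t-1) * (uu m (t-1) + uu m (t-2) + uu m (t-3)) ≤ uu m (t-1) * uu m t :=
      Nat.mul_le_mul_left _ H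
    nlinarith [s1, s2, s3, this]
  exact Nat.le_of_mul_le_mul_left key hpos

lemma keystep (m : ℕ) (t : ℤ) (pos0 : 0 < uu m t) (pos1 : 0 < uu m (t-1))
    (pos2 : t - 2 < 0 ∨ 0 < uu m (t-2))
    (H : uu (m+1) (t-1) ≤ uu m t) :
    uu (m+2) (t-2) ≤ uu (m+1) (t-1) := by
  have Hrec : uu m (t-1) + uu m (t-2) + uu m (t-3) ≤ uu m t := by
    have := uu_rec m (t-1)
    rw [this] at H
    calc uu m (t-1) + uu m (t-2) + uu m (t-3)
        = uu m (t-1) + uu m (t-1-1) + uu m (t-1-2) := by ring_nf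
      _ ≤ uu m t := H
  have A1 := rowlem m t pos0 Hrec
  have A2 : uu m (t-3) + uu m (t-4) + uu m (t-5) ≤ uu m (t-2) := by
    have := rowlem m (t-1) pos1 (by
      calc uu m (t-1-1) + uu m (t-1-2) + uu m (t-1-3)
          = uu m (t-2) + uu m (t-3) + uu m (t-4) := by ring_nf
        _ ≤ uu m (t-1) := A1)
    calc uu m (t-3) + uu m (t-4) + uu m (t-5)
        = uu m (t-1-2) + uu m (t-1-3) + uu m (t-1-4) := by ring_nf
      _ ≤ uu m (t-1-1) := this
      _ = uu m (t-2) := by ring_nf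
  have A3 : uu m (t-4) + uu m (t-5) + uu m (t-6) ≤ uu m (t-3) := by
    rcases pos2 with hneg | hpos2
    · rw [uu_neg m (t-3) (by omega), uu_neg m (t-4) (by omega), uu_neg m (t-5) (by omega),
        uu_neg m (t-6) (by omega)]
    · have := rowlem m (t-2) hpos2 (by
        calc uu m (t-2-1) + uu m (t-2-2) + uu m (t-2-3)
            = uu m (t-3) + uu m (t-4) + uu m (t-5) := by ring_nf
          _ ≤ uu m (t-2) := A2)
      calc uu m (t-4) + uu m (t-5) + uu m (t-6)
          = uu m (t-2-2) + uu m (t-2-3) + uu m (t-2-4) := by ring_nf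
        _ ≤ uu m (t-2-1) := this
        _ = uu m (t-3) := by ring_nf
  -- expand goal
  have grec : uu (m+2) (t-2) =
      uu m (t-2) + 2 * uu m (t-3) + 3 * uu m (t-4) + 2 * uu m (t-5) + uu m (t-6) := by
    rw [uu_rec (m+1) (t-2),
      show (t-2-1 : ℤ) = t-3 from by ring, show (t-2-2 : ℤ) = t-4 from by ring,
      uu_rec m (t-2), uu_rec m (t-3), uu_rec m (t-4),
      show (t-3-1 : ℤ) = t-4 from by ring, show (t-3-2 : ℤ) = t-5 from by ring,
      show (t-4-1 : ℤ) = t-5 from by ring, show (t-4-2 : ℤ) = t-6 from by ring]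
    ring
  have hrec1 : uu (m+1) (t-1) = uu m (t-1) + uu m (t-2) + uu m (t-3) := by
    rw [uu_rec m (t-1), show (t-1-1 : ℤ) = t-2 from by ring,
      show (t-1-2 : ℤ) = t-3 from by ring]
  rw [grec, hrec1]
  omega


instance pathAdjDec (n : ℕ) : DecidableRel (pathGraph n).Adj := fun u v =>
  decidable_of_iff _ pathGraph_adj.symm

/-- `v` is dominated by `s`. -/
def domin (n : ℕ) (s : Finset (Fin n)) (v : Fin n) : Prop :=
  v ∈ s ∨ ∃ u ∈ s, (pathGraph n).Adj u v

instance (n : ℕ) (s : Finset (Fin n)) (v : Fin n) : Decidable (domin n s v) := by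
  unfold domin; infer_instance

def domp (n : ℕ) (s : Finset (Fin n)) : Prop := ∀ v, domin n s v

instance (n : ℕ) (s : Finset (Fin n)) : Decidable (domp n s) := by
  unfold domp; infer_instance

/-- all vertices except the last are dominated -/
def dompA (n : ℕ) (s : Finset (Fin (n+1))) : Prop :=
  ∀ v, v ≠ Fin.last n → domin (n+1) s v

instance (n : ℕ) (s : Finset (Fin (n+1))) : Decidable (dompA n s) := by
  unfold dompA; infer_instance

def lastok (n : ℕ) (s : Finset (Fin (n+1))) : Prop := domin (n+1) s (Fin.last n)

instance (n : ℕ) (s : Finset (Fin (n+1))) : Decidable (lastok n s) := by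
  unfold lastok; infer_instance

def cA (n j : ℕ) : ℕ :=
  ((univ : Finset (Finset (Fin (n+1)))).filter
    (fun s => s.card = j ∧ domp (n+1) s ∧ Fin.last n ∈ s)).card

def cB (n j : ℕ) : ℕ :=
  ((univ : Finset (Finset (Fin (n+1)))).filter
    (fun s => s.card = j ∧ domp (n+1) s ∧ Fin.last n ∉ s)).card

def cC (n j : ℕ) : ℕ :=
  ((univ : Finset (Finset (Fin (n+1)))).filter
    (fun s => s.card = j ∧ dompA n s ∧ ¬ lastok n s)).card

def cABC (n j : ℕ) : ℕ :=
  ((univ : Finset (Finset (Fin (n+1)))).filter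
    (fun s => s.card = j ∧ dompA n s)).card

-- the shift maps
def FF (n : ℕ) (s : Finset (Fin (n+1))) : Finset (Fin (n+2)) := s.map Fin.castSuccEmb

noncomputable def GG (n : ℕ) (s' : Finset (Fin (n+2))) : Finset (Fin (n+1)) :=
  s'.preimage Fin.castSucc ((Fin.castSucc_injective _).injOn)

lemma castSuccEmb_eq {n : ℕ} (v : Fin (n+1)) : Fin.castSuccEmb v = Fin.castSucc v := rfl

lemma mem_FF {n : ℕ} {s : Finset (Fin (n+1))} {v : Fin (n+1)} :
    Fin.castSucc v ∈ FF n s ↔ v ∈ s := by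
  rw [FF, ← castSuccEmb_eq, Finset.mem_map']

lemma exists_of_mem_FF {n : ℕ} {s : Finset (Fin (n+1))} {u : Fin (n+2)} (hu : u ∈ FF n s) :
    ∃ w ∈ s, Fin.castSucc w = u := by
  obtain ⟨w, hw, hwe⟩ := Finset.mem_map.1 hu
  exact ⟨w, hw, hwe⟩

lemma last_not_mem_FF {n : ℕ} {s : Finset (Fin (n+1))} : Fin.last (n+1) ∉ FF n s := by
  intro h
  obtain ⟨w, -, hwe⟩ := exists_of_mem_FF h
  exact absurd (congrArg Fin.val hwe) (by simp [Fin.val_last]; omega)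

lemma mem_GG {n : ℕ} {s' : Finset (Fin (n+2))} {v : Fin (n+1)} :
    v ∈ GG n s' ↔ Fin.castSucc v ∈ s' := Finset.mem_preimage

lemma GG_FF {n : ℕ} (s : Finset (Fin (n+1))) : GG n (FF n s) = s := by
  ext v; rw [mem_GG, mem_FF]

lemma FF_GG {n : ℕ} (s' : Finset (Fin (n+2))) (h : Fin.last (n+1) ∉ s') :
    FF n (GG n s') = s' := by
  ext x
  rcases Fin.eq_castSucc_or_eq_last x with ⟨y, rfl⟩ | rfl
  · rw [mem_FF, mem_GG]
  · simp only [last_not_mem_FF, h]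

lemma card_FF {n : ℕ} (s : Finset (Fin (n+1))) : (FF n s).card = s.card := Finset.card_map _

lemma card_GG {n : ℕ} (s' : Finset (Fin (n+2))) (h : Fin.last (n+1) ∉ s') :
    (GG n s').card = s'.card := by
  conv_rhs => rw [← FF_GG s' h]
  rw [card_FF]

lemma adj_castSucc {n : ℕ} {u v : Fin (n+1)} :
    (pathGraph (n+2)).Adj (Fin.castSucc u) (Fin.castSucc v) ↔ (pathGraph (n+1)).Adj u v := by
  rw [pathGraph_adj, pathGraph_adj]
  simp [Fin.coe_castSucc]

lemma adj_last {n : ℕ} {u : Fin (n+2)} :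
    (pathGraph (n+2)).Adj u (Fin.last (n+1)) ↔ u = Fin.castSucc (Fin.last n) := by
  rw [pathGraph_adj, Fin.ext_iff]
  have hu := u.isLt
  simp only [Fin.val_last, Fin.coe_castSucc]
  omega

lemma adj_last' {n : ℕ} {u : Fin (n+2)} :
    (pathGraph (n+2)).Adj (Fin.last (n+1)) u ↔ u = Fin.castSucc (Fin.last n) := by
  rw [SimpleGraph.adj_comm]; exact adj_last

-- domination transfer for sets not containing the last vertex
lemma domin_FF {n : ℕ} (s : Finset (Fin (n+1))) (v : Fin (n+1)) :
    domin (n+2) (FF n s) (Fin.castSucc v) ↔ domin (n+1) s v := by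
  unfold domin
  constructor
  · rintro (h | ⟨u, hu, hadj⟩)
    · exact Or.inl (mem_FF.1 h)
    · obtain ⟨w, hw, rfl⟩ := exists_of_mem_FF hu
      exact Or.inr ⟨w, hw, adj_castSucc.1 hadj⟩
  · rintro (h | ⟨u, hu, hadj⟩)
    · exact Or.inl (mem_FF.2 h)
    · exact Or.inr ⟨Fin.castSucc u, mem_FF.2 hu, adj_castSucc.2 hadj⟩

lemma domin_FF_last {n : ℕ} (s : Finset (Fin (n+1))) :
    domin (n+2) (FF n s) (Fin.last (n+1)) ↔ Fin.last n ∈ s := by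
  unfold domin
  constructor
  · rintro (h | ⟨u, hu, hadj⟩)
    · exact absurd h last_not_mem_FF
    · rw [adj_last] at hadj; subst hadj; exact mem_FF.1 hu
  · intro h
    exact Or.inr ⟨Fin.castSucc (Fin.last n), mem_FF.2 h, adj_last.2 rfl⟩

lemma domin_insert_last {n : ℕ} (s : Finset (Fin (n+1))) (v : Fin (n+1)) :
    domin (n+2) (insert (Fin.last (n+1)) (FF n s)) (Fin.castSucc v) ↔
      (v = Fin.last n ∨ domin (n+1) s v) := by
  unfold domin
  constructor
  · rintro (h | ⟨u, hu, hadj⟩)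
    · rcases Finset.mem_insert.1 h with h | h
      · exact absurd h (Fin.castSucc_lt_last v).ne
      · exact Or.inr (Or.inl (mem_FF.1 h))
    · rcases Finset.mem_insert.1 hu with rfl | hu
      · rw [adj_last'] at hadj
        left
        exact Fin.castSucc_injective _ hadj
      · obtain ⟨w, hw, rfl⟩ := exists_of_mem_FF hu
        exact Or.inr (Or.inr ⟨w, hw, adj_castSucc.1 hadj⟩)
  · rintro (rfl | h | ⟨u, hu, hadj⟩)
    · exact Or.inr ⟨Fin.last (n+1), Finset.mem_insert_self _ _, adj_last'.2 rfl⟩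
    · exact Or.inl (Finset.mem_insert.2 (Or.inr (mem_FF.2 h)))
    · exact Or.inr ⟨Fin.castSucc u, Finset.mem_insert.2 (Or.inr (mem_FF.2 hu)),
        adj_castSucc.2 hadj⟩

lemma domp_iff {n : ℕ} (s : Finset (Fin (n+1))) :
    domp (n+1) s ↔ dompA n s ∧ lastok n s := by
  constructor
  · exact fun h => ⟨fun v _ => h v, h _⟩
  · rintro ⟨h1, h2⟩ v
    by_cases hv : v = Fin.last n
    · subst hv; exact h2
    · exact h1 v hv

lemma cB_succ (n j : ℕ) : cB (n+1) j = cA n j := by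
  unfold cB cA
  apply Finset.card_nbij' (GG n) (FF n)
  · intro s' hs'
    simp only [Finset.mem_coe, Finset.mem_filter, Finset.mem_univ, true_and] at hs' ⊢
    obtain ⟨hcard, hdom, hlast⟩ := hs'
    refine ⟨by rw [card_GG _ hlast, hcard], ?_, ?_⟩
    · intro v
      have h := hdom (Fin.castSucc v)
      rw [← FF_GG s' hlast] at h
      exact (domin_FF _ _).1 h
    · have h := hdom (Fin.last (n+1))
      rw [← FF_GG s' hlast] at h
      exact (domin_FF_last _).1 h
  · intro s hs
    simp only [Finset.mem_coe, Finset.mem_filter, Finset.mem_univ, true_and] at hs ⊢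
    obtain ⟨hcard, hdom, hlast⟩ := hs
    refine ⟨by rw [card_FF, hcard], ?_, last_not_mem_FF⟩
    intro w
    rcases Fin.eq_castSucc_or_eq_last w with ⟨v, rfl⟩ | rfl
    · exact (domin_FF _ _).2 (hdom v)
    · exact (domin_FF_last _).2 hlast
  · intro s' hs'
    simp only [Finset.mem_coe, Finset.mem_filter, Finset.mem_univ, true_and] at hs'
    exact FF_GG s' hs'.2.2
  · intro s _
    exact GG_FF s

lemma cC_succ (n j : ℕ) : cC (n+1) j = cB n j := by
  unfold cC cB
  apply Finset.card_nbij' (GG n) (FF n)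
  · intro s' hs'
    simp only [Finset.mem_coe, Finset.mem_filter, Finset.mem_univ, true_and] at hs' ⊢
    obtain ⟨hcard, hdom, hnl⟩ := hs'
    have hlast : Fin.last (n+1) ∉ s' := fun h => hnl (Or.inl h)
    refine ⟨by rw [card_GG _ hlast, hcard], ?_, ?_⟩
    · intro v
      have h := hdom (Fin.castSucc v) (Fin.castSucc_lt_last v).ne
      rw [← FF_GG s' hlast] at h
      exact (domin_FF _ _).1 h
    · intro h
      rw [mem_GG] at h
      exact hnl (Or.inr ⟨_, h, adj_last.2 rfl⟩)
  · intro s hs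
    simp only [Finset.mem_coe, Finset.mem_filter, Finset.mem_univ, true_and] at hs ⊢
    obtain ⟨hcard, hdom, hlast⟩ := hs
    refine ⟨by rw [card_FF, hcard], ?_, ?_⟩
    · intro w hw
      rcases Fin.eq_castSucc_or_eq_last w with ⟨v, rfl⟩ | rfl
      · exact (domin_FF _ _).2 (hdom v)
      · exact absurd rfl hw
    · intro h
      exact hlast ((domin_FF_last _).1 h)
  · intro s' hs'
    simp only [Finset.mem_coe, Finset.mem_filter, Finset.mem_univ, true_and] at hs'
    exact FF_GG s' (fun h => hs'.2.2 (Or.inl h))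
  · intro s _
    exact GG_FF s

lemma cA_succ (n j : ℕ) : cA (n+1) (j+1) = cABC n j := by
  unfold cA cABC
  apply Finset.card_nbij' (fun s' => GG n (s'.erase (Fin.last (n+1))))
    (fun s => insert (Fin.last (n+1)) (FF n s))
  · intro s' hs'
    simp only [Finset.mem_coe, Finset.mem_filter, Finset.mem_univ, true_and] at hs' ⊢
    obtain ⟨hcard, hdom, hlast⟩ := hs'
    have hrep : s' = insert (Fin.last (n+1)) (FF n (GG n (s'.erase (Fin.last (n+1))))) := by
      rw [FF_GG _ (Finset.notMem_erase _ _), Finset.insert_erase hlast]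
    constructor
    · rw [card_GG _ (Finset.notMem_erase _ _), Finset.card_erase_of_mem hlast, hcard]
      omega
    · intro v hv
      have h := hdom (Fin.castSucc v)
      rw [hrep] at h
      rcases (domin_insert_last _ _).1 h with h' | h'
      · exact absurd h' hv
      · exact h'
  · intro s hs
    simp only [Finset.mem_coe, Finset.mem_filter, Finset.mem_univ, true_and] at hs ⊢
    obtain ⟨hcard, hdom⟩ := hs
    refine ⟨?_, ?_, Finset.mem_insert_self _ _⟩
    · rw [Finset.card_insert_of_notMem last_not_mem_FF, card_FF, hcard]
    · intro w
      rcases Fin.eq_castSucc_or_eq_last w with ⟨v, rfl⟩ | rfl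
      · by_cases hv : v = Fin.last n
        · exact (domin_insert_last _ _).2 (Or.inl hv)
        · exact (domin_insert_last _ _).2 (Or.inr (hdom v hv))
      · exact Or.inl (Finset.mem_insert_self _ _)
  · intro s' hs'
    simp only [Finset.mem_coe, Finset.mem_filter, Finset.mem_univ, true_and] at hs'
    beta_reduce
    rw [FF_GG _ (Finset.notMem_erase _ _), Finset.insert_erase hs'.2.2]
  · intro s _
    beta_reduce
    rw [Finset.erase_insert last_not_mem_FF, GG_FF]

lemma cABC_eq (n j : ℕ) : cABC n j = cA n j + cB n j + cC n j := by
  unfold cABC cA cB cC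
  have h1 := Finset.card_filter_add_card_filter_not
    (s := (univ : Finset (Finset (Fin (n+1)))).filter (fun s => s.card = j ∧ dompA n s))
    (p := fun s => lastok n s)
  have h2 := Finset.card_filter_add_card_filter_not
    (s := (univ : Finset (Finset (Fin (n+1)))).filter (fun s => s.card = j ∧ domp (n+1) s))
    (p := fun s => Fin.last n ∈ s)
  rw [Finset.filter_filter, Finset.filter_filter] at h1 h2
  have e1 : ((univ : Finset (Finset (Fin (n+1)))).filter
      (fun s => (s.card = j ∧ dompA n s) ∧ lastok n s))
      = (univ : Finset (Finset (Fin (n+1)))).filter (fun s => s.card = j ∧ domp (n+1) s) := by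
    apply Finset.filter_congr
    intro s _
    rw [domp_iff]
    tauto
  have e2 : ((univ : Finset (Finset (Fin (n+1)))).filter
      (fun s => (s.card = j ∧ dompA n s) ∧ ¬ lastok n s))
      = (univ : Finset (Finset (Fin (n+1)))).filter (fun s => s.card = j ∧ dompA n s ∧ ¬ lastok n s) := by
    apply Finset.filter_congr
    intro s _
    tauto
  have e3 : ((univ : Finset (Finset (Fin (n+1)))).filter
      (fun s => (s.card = j ∧ domp (n+1) s) ∧ Fin.last n ∈ s))
      = (univ : Finset (Finset (Fin (n+1)))).filter (fun s => s.card = j ∧ domp (n+1) s ∧ Fin.last n ∈ s) := by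
    apply Finset.filter_congr
    intro s _
    tauto
  have e4 : ((univ : Finset (Finset (Fin (n+1)))).filter
      (fun s => (s.card = j ∧ domp (n+1) s) ∧ Fin.last n ∉ s))
      = (univ : Finset (Finset (Fin (n+1)))).filter (fun s => s.card = j ∧ domp (n+1) s ∧ Fin.last n ∉ s) := by
    apply Finset.filter_congr
    intro s _
    tauto
  rw [e1, e2] at h1
  rw [e3, e4] at h2
  omega

lemma cA_zero (n : ℕ) : cA n 0 = 0 := by
  unfold cA
  rw [Finset.card_eq_zero, Finset.filter_eq_empty_iff]
  rintro s - ⟨hc, -, hl⟩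
  rw [Finset.card_eq_zero] at hc
  subst hc
  exact absurd hl (Finset.notMem_empty _)

lemma cB_zero (n : ℕ) : cB n 0 = 0 := by
  unfold cB
  rw [Finset.card_eq_zero, Finset.filter_eq_empty_iff]
  rintro s - ⟨hc, hdom, -⟩
  rw [Finset.card_eq_zero] at hc
  subst hc
  rcases hdom (Fin.last n) with h | ⟨u, hu, -⟩
  · exact absurd h (Finset.notMem_empty _)
  · exact absurd hu (Finset.notMem_empty _)

lemma count_big {N j : ℕ} (h : N+1 < j) (P : Finset (Fin (N+1)) → Prop) [DecidablePred P] :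
    ((univ : Finset (Finset (Fin (N+1)))).filter (fun s => s.card = j ∧ P s)).card = 0 := by
  rw [Finset.card_eq_zero, Finset.filter_eq_empty_iff]
  rintro s - ⟨hc, -⟩
  have hle := Finset.card_le_univ s
  rw [Fintype.card_fin] at hle
  omega

def av (n j : ℕ) : ℕ := match j with | 0 => 0 | j+1 => vv j ((n:ℤ) - j)
def bv (n j : ℕ) : ℕ := match j with | 0 => 0 | j+1 => vv j ((n:ℤ) - j - 1)
def cv (n j : ℕ) : ℕ := match j with
  | 0 => (if n = 0 then 1 else 0)
  | j+1 => vv j ((n:ℤ) - j - 2)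

lemma formula : ∀ n : ℕ, (∀ j, cA n j = av n j) ∧ (∀ j, cB n j = bv n j) ∧
    (∀ j, cC n j = cv n j) := by
  intro n
  induction n with
  | zero =>
      refine ⟨?_, ?_, ?_⟩
      · intro j
        match j with
        | 0 => rw [cA_zero]; rfl
        | 1 =>
            rw [show cA 0 1 = 1 by decide]
            show 1 = vv 0 ((0:ℤ) - 0)
            norm_num [vv]
        | (j+2) =>
            show cA 0 (j+2) = vv (j+1) ((0:ℤ) - (j+1))
            rw [vv_neg _ _ (by push_cast; omega)]
            unfold cA
            exact count_big (by omega) _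
      · intro j
        match j with
        | 0 => rw [cB_zero]; rfl
        | 1 =>
            rw [show cB 0 1 = 0 by decide]
            show 0 = vv 0 ((0:ℤ) - 0 - 1)
            rw [vv_neg _ _ (by omega)]
        | (j+2) =>
            show cB 0 (j+2) = vv (j+1) ((0:ℤ) - (j+1) - 1)
            rw [vv_neg _ _ (by push_cast; omega)]
            unfold cB
            exact count_big (by omega) _
      · intro j
        match j with
        | 0 => rw [show cC 0 0 = 1 by decide]; rfl
        | 1 =>
            rw [show cC 0 1 = 0 by decide]
            show 0 = vv 0 ((0:ℤ) - 0 - 2)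
            rw [vv_neg _ _ (by omega)]
        | (j+2) =>
            show cC 0 (j+2) = vv (j+1) ((0:ℤ) - (j+1) - 2)
            rw [vv_neg _ _ (by push_cast; omega)]
            unfold cC
            exact count_big (by omega) _
  | succ n ih =>
      obtain ⟨ihA, ihB, ihC⟩ := ih
      refine ⟨?_, ?_, ?_⟩
      · intro j
        match j with
        | 0 => rw [cA_zero]; rfl
        | (j+1) =>
            rw [cA_succ, cABC_eq, ihA j, ihB j, ihC j]
            match j with
            | 0 =>
                show av n 0 + bv n 0 + cv n 0 = vv 0 ((((n+1):ℕ):ℤ) - 0)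
                simp only [av, bv, cv]
                rcases Nat.eq_zero_or_pos n with rfl | hn
                · norm_num [vv]
                · rw [if_neg (by omega)]
                  have hz : vv 0 ((((n+1):ℕ):ℤ) - 0) = 0 := by
                    simp only [vv]
                    rw [if_neg (by push_cast; omega)]
                  omega
            | (j+1) =>
                show av n (j+1) + bv n (j+1) + cv n (j+1)
                  = vv (j+1) ((((n+1):ℕ):ℤ) - (j+1))
                simp only [av, bv, cv]
                have e : ((((n+1):ℕ)):ℤ) - (j+1) = (n:ℤ) - j := by push_cast; ring
                rw [e]
                show _ = vv j ((n:ℤ)-j) + vv j ((n:ℤ)-j-1) + vv j ((n:ℤ)-j-2)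
                ring
      · intro j
        rw [cB_succ, ihA j]
        match j with
        | 0 => rfl
        | (j+1) =>
            show vv j ((n:ℤ) - j) = vv j ((((n+1):ℕ):ℤ) - j - 1)
            congr 1
            push_cast
            ring
      · intro j
        rw [cC_succ, ihB j]
        match j with
        | 0 => simp [bv, cv]
        | (j+1) =>
            show vv j ((n:ℤ) - j - 1) = vv j ((((n+1):ℕ):ℤ) - j - 2)
            congr 1
            push_cast
            ring

lemma domCount_eq_filter (n i : ℕ) :
    domCount (pathGraph n) i =
    ((univ : Finset (Finset (Fin n))).filter (fun s => s.card = i ∧ domp n s)).card := by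
  rw [domCount, Nat.card_eq_fintype_card, Fintype.card_subtype]
  rfl

lemma domCount_succ (n j : ℕ) :
    domCount (pathGraph (n+1)) (j+1) = uu j ((n:ℤ) - j) := by
  rw [domCount_eq_filter]
  have h2 := Finset.card_filter_add_card_filter_not
    (s := (univ : Finset (Finset (Fin (n+1)))).filter (fun s => s.card = j+1 ∧ domp (n+1) s))
    (p := fun s => Fin.last n ∈ s)
  rw [Finset.filter_filter, Finset.filter_filter] at h2
  have e3 : ((univ : Finset (Finset (Fin (n+1)))).filter
      (fun s => (s.card = j+1 ∧ domp (n+1) s) ∧ Fin.last n ∈ s)).card = cA n (j+1) := by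
    unfold cA
    congr 1
    apply Finset.filter_congr
    intro s _
    tauto
  have e4 : ((univ : Finset (Finset (Fin (n+1)))).filter
      (fun s => (s.card = j+1 ∧ domp (n+1) s) ∧ ¬ Fin.last n ∈ s)).card = cB n (j+1) := by
    unfold cB
    congr 1
    apply Finset.filter_congr
    intro s _
    tauto
  rw [e3, e4] at h2
  have hA := (formula n).1 (j+1)
  have hB := (formula n).2.1 (j+1)
  have hAe : av n (j+1) = vv j ((n:ℤ) - j) := rfl
  have hBe : bv n (j+1) = vv j ((n:ℤ) - j - 1) := rfl
  rw [hA, hB, hAe, hBe] at h2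
  rw [← h2]
  rfl

lemma domCount_zero (n : ℕ) : domCount (pathGraph (n+1)) 0 = 0 := by
  rw [domCount_eq_filter]
  rw [Finset.card_eq_zero, Finset.filter_eq_empty_iff]
  rintro s - ⟨hc, hdom⟩
  rw [Finset.card_eq_zero] at hc
  subst hc
  rcases hdom (Fin.last n) with h | ⟨u, hu, -⟩
  · exact absurd h (Finset.notMem_empty _)
  · exact absurd hu (Finset.notMem_empty _)

end DomPath

open DomPath in
/-- For every `n ≥ 3`, the domination polynomial of the path `P_n` is unimodal. -/
theorem stmt_3 (n : ℕ) (hn : 3 ≤ n) :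
    ∃ k, (∀ i, i < k → domCount (SimpleGraph.pathGraph n) i ≤
            domCount (SimpleGraph.pathGraph n) (i + 1)) ∧
      (∀ i, k ≤ i → domCount (SimpleGraph.pathGraph n) (i + 1) ≤
            domCount (SimpleGraph.pathGraph n) i) := by
  obtain ⟨N, rfl⟩ : ∃ N, n = N + 1 := ⟨n - 1, by omega⟩
  set f : ℕ → ℕ := fun i => domCount (SimpleGraph.pathGraph (N+1)) i with hf
  have hf0 : f 0 = 0 := domCount_zero N
  have hfs : ∀ j : ℕ, f (j+1) = uu j ((N:ℤ) - j) := fun j => domCount_succ N j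
  -- a descent exists
  have hdesc : ∃ i, f (i+1) < f i := by
    refine ⟨N+1, ?_⟩
    rw [hfs (N+1), hfs N]
    rw [uu_neg _ _ (by push_cast; omega)]
    have := uu_pos N ((N:ℤ) - N) (by omega) (by push_cast; omega)
    omega
  set k := Nat.find hdesc with hk
  have hkspec : f (k+1) < f k := Nat.find_spec hdesc
  have hkmin : ∀ i, i < k → ¬ f (i+1) < f i := fun i hi => Nat.find_min hdesc hi
  have hk1 : 1 ≤ k := by
    by_contra h
    have hk0 : k = 0 := by omega
    rw [hk0, hf0] at hkspec
    omega
  -- k ≥ (N+1)/3 type bound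
  have hk3 : (N:ℤ) + 1 ≤ 3 * k := by
    obtain ⟨m0, hm0⟩ : ∃ m0, k = m0 + 1 := ⟨k - 1, by omega⟩
    have hfk : f (m0+1) = uu m0 ((N:ℤ) - m0) := hfs m0
    by_contra hcon
    rw [hm0] at hcon
    have hz : uu m0 ((N:ℤ) - m0) = 0 := uu_big _ _ (by push_cast at hcon ⊢; omega)
    rw [hm0, hfk, hz] at hkspec
    omega
  -- decreasing from k on
  have hdec : ∀ i, k ≤ i → f (i+1) ≤ f i := by
    intro i hi
    induction i, hi using Nat.le_induction with
    | base => exact le_of_lt hkspec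
    | succ i hik ih =>
        have hprev : f (i+1) ≤ f i := ih
        rcases le_or_gt (N+1) i with hbig | hsmall
        · -- i ≥ N+1 : f (i+2) = 0
          rw [hfs (i+1), uu_neg _ _ (by push_cast; omega)]
          exact Nat.zero_le _
        · -- i ≤ N
          obtain ⟨m, rfl⟩ : ∃ m, i = m + 1 := ⟨i - 1, by omega⟩
          set t : ℤ := (N:ℤ) - m with ht
          have h3i : (N:ℤ) + 1 ≤ 3 * (m+1) := le_trans hk3 (by push_cast; omega)
          have pos0 : 0 < uu m t := uu_pos m t (by push_cast; omega) (by push_cast; omega)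
          have pos1 : 0 < uu m (t-1) := uu_pos m (t-1) (by push_cast; omega) (by push_cast; omega)
          have pos2 : t - 2 < 0 ∨ 0 < uu m (t-2) := by
            rcases lt_or_ge (t-2) 0 with h | h
            · exact Or.inl h
            · exact Or.inr (uu_pos m (t-2) h (by push_cast; omega))
          have H : uu (m+1) (t-1) ≤ uu m t := by
            have e1 : f (m+1+1) = uu (m+1) (t-1) := by
              rw [hfs (m+1)]
              congr 1
              push_cast
              ring
            have e2 : f (m+1) = uu m t := hfs m
            rw [e1, e2] at hprev
            exact hprev
          have key := keystep m t pos0 pos1 pos2 H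
          have e3 : f (m+1+1+1) = uu (m+2) (t-2) := by
            rw [hfs (m+2)]
            congr 1
            push_cast
            ring
          have e4 : f (m+1+1) = uu (m+1) (t-1) := by
            rw [hfs (m+1)]
            congr 1
            push_cast
            ring
          rw [e3, e4]
          exact key
  refine ⟨k, ?_, ?_⟩
  · intro i hi
    exact le_of_not_gt (hkmin i hi)
  · intro i hi
    exact hdec i hi
end

section
/- The domination polynomial of every complete multipartite graph K_{n_1,...,n_k} is unimodal. -/
namespace DomUnimodal

open Finset

variable {k : ℕ} {n : Fin k → ℕ}

abbrev V (n : Fin k → ℕ) := (i : Fin k) × Fin (n i)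

/-- Dominating predicate for the complete multipartite graph. -/
def Dom (s : Finset (V n)) : Prop := ∀ v : V n, v ∈ s ∨ ∃ u ∈ s, u.1 ≠ v.1

open Classical in
/-- The finset of dominating sets of size `j`. -/
noncomputable def D (n : Fin k → ℕ) (j : ℕ) : Finset (Finset (V n)) :=
  univ.filter fun s => s.card = j ∧ Dom s

lemma mem_D {j : ℕ} {s : Finset (V n)} : s ∈ D n j ↔ s.card = j ∧ Dom s := by
  classical
  simp [D]

lemma adj_iff {u v : V n} :
    (SimpleGraph.completeMultipartiteGraph fun i => Fin (n i)).Adj u v ↔ u.1 ≠ v.1 :=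
  Iff.rfl

lemma domCount_eq (n : Fin k → ℕ) (j : ℕ) :
    domCount (SimpleGraph.completeMultipartiteGraph fun i => Fin (n i)) j = (D n j).card := by
  classical
  rw [domCount, Nat.card_eq_fintype_card, Fintype.card_subtype, D]
  refine congrArg Finset.card (Finset.filter_congr fun s _ => ?_)
  exact and_congr_right fun _ => forall_congr' fun v =>
    or_congr Iff.rfl (exists_congr fun u => and_congr_right fun _ => adj_iff)

lemma dom_mono {s t : Finset (V n)} (hst : s ⊆ t) (hs : Dom s) : Dom t := by
  intro v
  rcases hs v with h | ⟨u, hu, hadj⟩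
  · exact Or.inl (hst h)
  · exact Or.inr ⟨u, hst hu, hadj⟩

/-- The `i`-th part. -/
noncomputable def part (n : Fin k → ℕ) (i : Fin k) : Finset (V n) :=
  univ.filter fun v => v.1 = i

lemma mem_part {i : Fin k} {v : V n} : v ∈ part n i ↔ v.1 = i := by
  simp [part]

lemma dom_iff {s : Finset (V n)} : Dom s ↔ ∀ i, ¬ s ⊂ part n i := by
  constructor
  · intro hdom i hsub
    obtain ⟨v, hvp, hvs⟩ := Finset.exists_of_ssubset hsub
    rcases hdom v with h | ⟨u, hu, hadj⟩
    · exact hvs h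
    · exact hadj ((mem_part.1 (hsub.subset hu)).trans (mem_part.1 hvp).symm)
  · intro h v
    by_cases hv : v ∈ s
    · exact Or.inl hv
    · refine Or.inr ?_
      by_contra hno
      push_neg at hno
      apply h v.1
      rw [Finset.ssubset_iff_of_subset (fun u hu => mem_part.2 (hno u hu))]
      exact ⟨v, mem_part.2 rfl, hv⟩

lemma D_zero_of_gt {j : ℕ} (hj : Fintype.card (V n) < j) : (D n j).card = 0 := by
  rw [Finset.card_eq_zero, Finset.eq_empty_iff_forall_notMem]
  intro s hs
  have := (mem_D.1 hs).1
  have hle := Finset.card_le_univ s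
  omega

/-- Increasing part: double counting by adding one vertex. -/
lemma incr {j : ℕ} (hj : 2 * j < Fintype.card (V n)) : (D n j).card ≤ (D n (j + 1)).card := by
  classical
  set N := Fintype.card (V n) with hN
  set P : Finset ((_ : Finset (V n)) × V n) := (D n j).sigma (fun S => Sᶜ) with hP
  set f : ((_ : Finset (V n)) × V n) → Finset (V n) := fun x => insert x.2 x.1 with hf
  have hmemP : ∀ x : ((_ : Finset (V n)) × V n), x ∈ P ↔ x.1 ∈ D n j ∧ x.2 ∉ x.1 := by
    intro x; simp [hP, Finset.mem_sigma]
  have hcardP : P.card = (D n j).card * (N - j) := by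
    rw [hP, card_sigma]
    rw [Finset.sum_congr rfl (fun S hS => ?_), Finset.sum_const, smul_eq_mul]
    rw [Finset.card_compl, (mem_D.1 hS).1]
  -- image is inside D (j+1)
  have himg : P.image f ⊆ D n (j + 1) := by
    intro T hT
    obtain ⟨x, hx, rfl⟩ := Finset.mem_image.1 hT
    rw [hmemP] at hx
    refine mem_D.2 ⟨?_, dom_mono (Finset.subset_insert _ _) (mem_D.1 hx.1).2⟩
    rw [hf]
    rw [Finset.card_insert_of_notMem hx.2, (mem_D.1 hx.1).1]
  -- fibers have size ≤ j+1
  have hfib : ∀ b ∈ P.image f, (P.filter fun x => f x = b).card ≤ j + 1 := by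
    intro b hb
    obtain ⟨a, ha, rfl⟩ := Finset.mem_image.1 hb
    have hbcard : (f a).card = j + 1 := (mem_D.1 (himg (Finset.mem_image_of_mem f ha))).1
    rw [← hbcard]
    apply Finset.card_le_card_of_injOn (fun x => x.2)
    · intro x hx
      have := (Finset.mem_filter.1 hx).2
      rw [← this, hf]
      exact Finset.mem_insert_self _ _
    · intro x hx y hy hxy
      have hxy' : x.2 = y.2 := hxy
      have hx2 := Finset.mem_filter.1 (Finset.mem_coe.1 hx)
      have hy2 := Finset.mem_filter.1 (Finset.mem_coe.1 hy)
      have hx1 : x.1 = (f a).erase x.2 := by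
        rw [← hx2.2, hf]
        exact (Finset.erase_insert ((hmemP x).1 hx2.1).2).symm
      have hy1 : y.1 = (f a).erase y.2 := by
        rw [← hy2.2, hf]
        exact (Finset.erase_insert ((hmemP y).1 hy2.1).2).symm
      refine Sigma.ext ?_ (heq_of_eq hxy')
      rw [hx1, hy1, hxy']
  have h1 : P.card ≤ (j + 1) * (P.image f).card := Finset.card_le_mul_card_image P (j + 1) hfib
  have h2 : (P.image f).card ≤ (D n (j + 1)).card := Finset.card_le_card himg
  have hjN : j < N := by omega
  have key : (D n j).card * (N - j) ≤ (j + 1) * (D n (j + 1)).card :=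
    hcardP ▸ h1.trans (Nat.mul_le_mul_left _ h2)
  have h3 : (j + 1) ≤ N - j := by omega
  have key2 : (D n j).card * (N - j) ≤ (N - j) * (D n (j + 1)).card :=
    key.trans (Nat.mul_le_mul_right _ h3)
  rw [mul_comm] at key2
  exact Nat.le_of_mul_le_mul_left key2 (by omega)



open Classical in
lemma bad_le_one {j : ℕ} {S : Finset (V n)} (hS : S ∈ D n (j + 1)) (hj : 2 ≤ j)
    (hpart : ∀ i, S ≠ part n i) :
    (S.filter fun v => ¬ Dom (S.erase v)).card ≤ 1 := by
  classical
  rw [Finset.card_le_one]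
  intro v hv w hw
  by_contra hvw
  obtain ⟨hvS, hvbad⟩ := Finset.mem_filter.1 hv
  obtain ⟨hwS, hwbad⟩ := Finset.mem_filter.1 hw
  rw [dom_iff] at hvbad hwbad
  push_neg at hvbad hwbad
  obtain ⟨a, ha⟩ := hvbad
  obtain ⟨b, hb⟩ := hwbad
  have hwv : w ≠ v := fun h => hvw h.symm
  have hwa : w.1 = a := mem_part.1 (ha.subset (Finset.mem_erase.2 ⟨hwv, hwS⟩))
  have hvb : v.1 = b := mem_part.1 (hb.subset (Finset.mem_erase.2 ⟨hvw, hvS⟩))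
  have hScard : S.card = j + 1 := (mem_D.1 hS).1
  have hcard : 1 ≤ ((S.erase v).erase w).card := by
    rw [Finset.card_erase_of_mem (Finset.mem_erase.2 ⟨hwv, hwS⟩),
      Finset.card_erase_of_mem hvS, hScard]
    omega
  obtain ⟨x, hx⟩ := Finset.card_pos.1 (show 0 < ((S.erase v).erase w).card by omega)
  obtain ⟨hxw, hxv, hxS⟩ : x ≠ w ∧ x ≠ v ∧ x ∈ S := by
    have h1 := Finset.mem_erase.1 hx
    have h2 := Finset.mem_erase.1 h1.2
    exact ⟨h1.1, h2.1, h2.2⟩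
  have hxa : x.1 = a := mem_part.1 (ha.subset (Finset.mem_erase.2 ⟨hxv, hxS⟩))
  have hxb : x.1 = b := mem_part.1 (hb.subset (Finset.mem_erase.2 ⟨hxw, hxS⟩))
  have hab : a = b := hxa ▸ hxb
  have hsub : S ⊆ part n a := by
    intro y hy
    by_cases hyv : y = v
    · subst hyv
      exact mem_part.2 (hvb.trans hab.symm)
    · exact ha.subset (Finset.mem_erase.2 ⟨hyv, hy⟩)
  have hdom := (mem_D.1 hS).2
  rw [dom_iff] at hdom
  have hne := hpart a
  exact hdom a (Finset.ssubset_iff_subset_ne.2 ⟨hsub, hne⟩)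

lemma parts_card {j : ℕ} (hj : Fintype.card (V n) < 2 * (j + 1)) :
    ((D n (j + 1)).filter fun S => ∃ i, S = part n i).card ≤ 1 := by
  classical
  rw [Finset.card_le_one]
  intro S hS T hT
  obtain ⟨hSD, i, rfl⟩ := Finset.mem_filter.1 hS
  obtain ⟨hTD, i', rfl⟩ := Finset.mem_filter.1 hT
  by_contra hne
  have hii : i ≠ i' := fun h => hne (h ▸ rfl)
  have hdisj : Disjoint (part n i) (part n i') := by
    rw [Finset.disjoint_left]
    intro x hx hx'
    exact hii ((mem_part.1 hx).symm.trans (mem_part.1 hx'))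
  have hu := Finset.card_union_of_disjoint hdisj
  have hle := Finset.card_le_univ (part n i ∪ part n i')
  have h1 : (part n i).card = j + 1 := (mem_D.1 hSD).1
  have h2 : (part n i').card = j + 1 := (mem_D.1 hTD).1
  omega

/-- Decreasing part: double counting by removing one vertex. -/
lemma decr {j : ℕ} (h2 : 2 ≤ j) (hNj : Fintype.card (V n) < 2 * j)
    (hd : 1 ≤ (D n j).card) : (D n (j + 1)).card ≤ (D n j).card := by
  classical
  set N := Fintype.card (V n) with hNdef
  have hjN : j ≤ N := by
    obtain ⟨s, hs⟩ := Finset.card_pos.1 hd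
    have h1 := (mem_D.1 hs).1
    have h2 := Finset.card_le_univ s
    omega
  set D' : Finset (Finset (V n)) := (D n (j + 1)).filter (fun S => ∀ i, S ≠ part n i) with hD'
  have hsplit : (D n (j + 1)).card ≤ D'.card + 1 := by
    have hsubD : D n (j + 1) ⊆ D' ∪ ((D n (j + 1)).filter fun S => ∃ i, S = part n i) := by
      intro S hS
      by_cases h : ∀ i, S ≠ part n i
      · exact Finset.mem_union_left _ (Finset.mem_filter.2 ⟨hS, h⟩)
      · push_neg at h
        exact Finset.mem_union_right _ (Finset.mem_filter.2 ⟨hS, h⟩)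
    have hc1 := Finset.card_le_card hsubD
    have hc2 := Finset.card_union_le D' ((D n (j + 1)).filter fun S => ∃ i, S = part n i)
    have hc3 := parts_card (n := n) (j := j) (by omega)
    omega
  set P := D'.sigma (fun S => S.filter fun v => Dom (S.erase v)) with hPdef
  have hmemP : ∀ x : ((_ : Finset (V n)) × V n),
      x ∈ P ↔ x.1 ∈ D' ∧ x.2 ∈ x.1 ∧ Dom (x.1.erase x.2) := by
    intro x
    simp [hPdef, Finset.mem_sigma, Finset.mem_filter, and_assoc]
  have hlower : D'.card * j ≤ P.card := by
    rw [hPdef, card_sigma]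
    calc D'.card * j = ∑ _S ∈ D', j := by rw [Finset.sum_const, smul_eq_mul]
      _ ≤ ∑ S ∈ D', (S.filter fun v => Dom (S.erase v)).card := by
          apply Finset.sum_le_sum
          intro S hS
          have hSD := Finset.mem_filter.1 hS
          have hbad := bad_le_one hSD.1 h2 hSD.2
          have hsub2 : S ⊆ (S.filter fun v => Dom (S.erase v))
              ∪ (S.filter fun v => ¬ Dom (S.erase v)) := by
            intro v hv
            by_cases h : Dom (S.erase v)
            · exact Finset.mem_union_left _ (Finset.mem_filter.2 ⟨hv, h⟩)
            · exact Finset.mem_union_right _ (Finset.mem_filter.2 ⟨hv, h⟩)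
          have hc1 := Finset.card_le_card hsub2
          have hc2 := Finset.card_union_le (S.filter fun v => Dom (S.erase v))
            (S.filter fun v => ¬ Dom (S.erase v))
          have hcard : S.card = j + 1 := (mem_D.1 hSD.1).1
          omega
  set f : ((_ : Finset (V n)) × V n) → Finset (V n) := fun x => x.1.erase x.2 with hf
  have himg : P.image f ⊆ D n j := by
    intro T hT
    obtain ⟨x, hx, rfl⟩ := Finset.mem_image.1 hT
    rw [hmemP] at hx
    refine mem_D.2 ⟨?_, hx.2.2⟩
    rw [hf, Finset.card_erase_of_mem hx.2.1, (mem_D.1 (Finset.mem_filter.1 hx.1).1).1]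
    omega
  have hfib : ∀ b ∈ P.image f, (P.filter fun x => f x = b).card ≤ N - j := by
    intro b hb
    have hbcard : b.card = j := (mem_D.1 (himg hb)).1
    have hcompl : N - j = bᶜ.card := by rw [Finset.card_compl, hbcard]
    rw [hcompl]
    apply Finset.card_le_card_of_injOn (fun x => x.2)
    · intro x hx
      obtain ⟨hxP, hxb⟩ := Finset.mem_filter.1 (Finset.mem_coe.1 hx)
      rw [Finset.mem_coe, Finset.mem_compl, ← hxb, hf]
      exact Finset.notMem_erase _ _
    · intro x hx y hy hxy
      have hxy' : x.2 = y.2 := hxy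
      obtain ⟨hxP, hxb⟩ := Finset.mem_filter.1 (Finset.mem_coe.1 hx)
      obtain ⟨hyP, hyb⟩ := Finset.mem_filter.1 (Finset.mem_coe.1 hy)
      have hx1 : x.1 = insert x.2 b := by
        rw [← hxb, hf, Finset.insert_erase ((hmemP x).1 hxP).2.1]
      have hy1 : y.1 = insert y.2 b := by
        rw [← hyb, hf, Finset.insert_erase ((hmemP y).1 hyP).2.1]
      exact Sigma.ext (by rw [hx1, hy1, hxy']) (heq_of_eq hxy')
  have hupper : P.card ≤ (N - j) * (D n j).card :=
    (Finset.card_le_mul_card_image P (N - j) hfib).trans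
      (Nat.mul_le_mul_left _ (Finset.card_le_card himg))
  by_contra hgt
  push_neg at hgt
  have hchain : j * (D n j).card ≤ (N - j) * (D n j).card := by
    calc j * (D n j).card ≤ j * D'.card := by
          apply Nat.mul_le_mul_left
          omega
      _ = D'.card * j := mul_comm _ _
      _ ≤ P.card := hlower
      _ ≤ (N - j) * (D n j).card := hupper
  have hlt : (N - j) * (D n j).card < j * (D n j).card :=
    Nat.mul_lt_mul_of_lt_of_le (by omega) (le_refl _) (by omega)
  omega

lemma D_nonempty (hn : ∀ i, 1 ≤ n i) (hk : 2 ≤ k) {j : ℕ} (h2 : 2 ≤ j)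
    (hjN : j ≤ Fintype.card (V n)) : 1 ≤ (D n j).card := by
  classical
  have h0 : (0 : ℕ) < k := by omega
  have h1 : (1 : ℕ) < k := by omega
  set v₁ : V n := ⟨⟨0, h0⟩, ⟨0, hn _⟩⟩ with hv₁
  set v₂ : V n := ⟨⟨1, h1⟩, ⟨0, hn _⟩⟩ with hv₂
  have hfst : v₁.1 ≠ v₂.1 := by
    intro h
    have := congrArg Fin.val h
    simp [hv₁, hv₂] at this
  have hne : v₁ ≠ v₂ := fun h => hfst (congrArg Sigma.fst h)
  have hcard2 : ({v₁, v₂} : Finset (V n)).card = 2 := Finset.card_pair hne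
  obtain ⟨s, hsub, hscard⟩ := Finset.exists_superset_card_eq
    (show ({v₁, v₂} : Finset (V n)).card ≤ j by rw [hcard2]; exact h2) hjN
  have hdom : Dom s := by
    rw [dom_iff]
    intro i hss
    have hv1 : v₁.1 = i := mem_part.1 (hss.subset (hsub (by simp)))
    have hv2 : v₂.1 = i := mem_part.1 (hss.subset (hsub (by simp)))
    exact hfst (hv1.trans hv2.symm)
  rw [Nat.one_le_iff_ne_zero, ← Nat.pos_iff_ne_zero, Finset.card_pos]
  exact ⟨s, mem_D.2 ⟨hscard, hdom⟩⟩

lemma D_eq_zero_of_k_le_one (hk : k ≤ 1) {j : ℕ} (hj : j < Fintype.card (V n)) :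
    (D n j).card = 0 := by
  classical
  rw [Finset.card_eq_zero, Finset.eq_empty_iff_forall_notMem]
  intro s hs
  obtain ⟨hcard, hdom⟩ := mem_D.1 hs
  have hne : Nonempty (V n) := by
    rw [← Fintype.card_pos_iff]
    omega
  obtain ⟨v⟩ := hne
  have huniv : (univ : Finset (V n)) = part n v.1 := by
    ext u
    simp only [Finset.mem_univ, mem_part, true_iff]
    have h1 := u.1.isLt
    have h2 := v.1.isLt
    exact Fin.ext (by omega)
  rw [dom_iff] at hdom
  apply hdom v.1
  rw [← huniv]
  refine Finset.ssubset_univ_iff.2 fun h => ?_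
  rw [h, Finset.card_univ] at hcard
  omega

lemma two_le_card (hn : ∀ i, 1 ≤ n i) (hk : 2 ≤ k) : 2 ≤ Fintype.card (V n) := by
  rw [Fintype.card_sigma]
  simp only [Fintype.card_fin]
  calc (2 : ℕ) ≤ k := hk
    _ = (Finset.univ : Finset (Fin k)).card • 1 := by
        rw [Finset.card_univ, Fintype.card_fin, smul_eq_mul, mul_one]
    _ ≤ ∑ i, n i := Finset.card_nsmul_le_sum _ _ _ (fun i _ => hn i)

end DomUnimodal

/-- The domination polynomial of every complete multipartite graph `K_{n_1,…,n_k}`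
is unimodal. -/
theorem stmt_7 (k : ℕ) (n : Fin k → ℕ) (hn : ∀ i, 1 ≤ n i) :
    ∃ m, (∀ i, i < m →
        domCount (SimpleGraph.completeMultipartiteGraph fun i => Fin (n i)) i ≤
          domCount (SimpleGraph.completeMultipartiteGraph fun i => Fin (n i)) (i + 1)) ∧
      (∀ i, m ≤ i →
        domCount (SimpleGraph.completeMultipartiteGraph fun i => Fin (n i)) (i + 1) ≤
          domCount (SimpleGraph.completeMultipartiteGraph fun i => Fin (n i)) i) := by
  classical
  simp only [DomUnimodal.domCount_eq]
  set N := Fintype.card (DomUnimodal.V n) with hN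
  by_cases hk : k ≤ 1
  · refine ⟨N, fun i hi => ?_, fun i hi => ?_⟩
    · rw [DomUnimodal.D_eq_zero_of_k_le_one hk hi]
      exact Nat.zero_le _
    · rw [DomUnimodal.D_zero_of_gt (show N < i + 1 by omega)]
      exact Nat.zero_le _
  · push_neg at hk
    have hk2 : 2 ≤ k := hk
    have hN2 : 2 ≤ N := DomUnimodal.two_le_card hn hk2
    have hdec : ∀ i, N / 2 < i → (DomUnimodal.D n (i + 1)).card ≤ (DomUnimodal.D n i).card := by
      intro i hi
      by_cases hiN : i ≤ N
      · exact DomUnimodal.decr (by omega) (by omega)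
          (DomUnimodal.D_nonempty hn hk2 (by omega) hiN)
      · rw [DomUnimodal.D_zero_of_gt (show N < i + 1 by omega)]
        exact Nat.zero_le _
    have hinc : ∀ i, i < N / 2 → (DomUnimodal.D n i).card ≤ (DomUnimodal.D n (i + 1)).card := by
      intro i hi
      exact DomUnimodal.incr (by omega)
    by_cases hmid : (DomUnimodal.D n (N / 2 + 1)).card ≤ (DomUnimodal.D n (N / 2)).card
    · refine ⟨N / 2, fun i hi => hinc i hi, fun i hi => ?_⟩
      rcases eq_or_lt_of_le hi with rfl | h
      · exact hmid
      · exact hdec i h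
    · refine ⟨N / 2 + 1, fun i hi => ?_, fun i hi => hdec i (by omega)⟩
      rcases Nat.lt_succ_iff_lt_or_eq.1 hi with h | rfl
      · exact hinc i h
      · omega
end

section
/- Let G be a graph on n vertices and k ≥ n/2. If d_k(G)/C(n,k) ≥ (n−k)/(k+1), then d_{i+1}(G) ≤ d_i(G) for all i ≥ k. -/
private lemma domCount_le_choose {V : Type*} [Fintype V] (G : SimpleGraph V) (i : ℕ) :
    domCount G i ≤ (Fintype.card V).choose i := by
  classical
  have hinj : Function.Injective
      (fun x : {s : Finset V // s.card = i ∧ ∀ v, v ∈ s ∨ ∃ u ∈ s, G.Adj u v} =>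
        (⟨x.1, x.2.1⟩ : {s : Finset V // s.card = i})) := by
    intro a b hab
    ext : 1
    simpa [Subtype.ext_iff] using hab
  have := Nat.card_le_card_of_injective _ hinj
  rw [Nat.card_eq_fintype_card (α := {s : Finset V // s.card = i}),
    Fintype.card_finset_len] at this
  exact this

private lemma domCount_mul_le {V : Type*} [Fintype V] (G : SimpleGraph V) (i : ℕ) :
    domCount G i * (Fintype.card V - i) ≤ domCount G (i + 1) * (i + 1) := by
  classical
  set n := Fintype.card V
  have hcard : ∀ j : ℕ, domCount G j =
      (Finset.univ.filter
        (fun s : Finset V => s.card = j ∧ ∀ v, v ∈ s ∨ ∃ u ∈ s, G.Adj u v)).card := by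
    intro j
    rw [domCount, Nat.card_eq_fintype_card, Fintype.card_subtype]
  set D : ℕ → Finset (Finset V) := fun j => Finset.univ.filter
      (fun s : Finset V => s.card = j ∧ ∀ v, v ∈ s ∨ ∃ u ∈ s, G.Adj u v) with hD
  rw [hcard i, hcard (i + 1)]
  show (D i).card * (n - i) ≤ (D (i + 1)).card * (i + 1)
  refine Finset.card_mul_le_card_mul (s := D i) (t := D (i + 1)) (fun a b => a ⊆ b) ?_ ?_
  · -- each dominating set of size i has ≥ n - i dominating supersets of size i+1
    intro a ha
    rw [Finset.mem_filter] at ha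
    obtain ⟨-, hac, hadom⟩ := ha
    have hsub : (Finset.univ \ a).image (fun v => insert v a) ⊆
        Finset.bipartiteAbove (fun a b => a ⊆ b) (D (i + 1)) a := by
      intro t ht
      rw [Finset.mem_image] at ht
      obtain ⟨v, hv, rfl⟩ := ht
      have hva : v ∉ a := by simp at hv; exact hv
      rw [Finset.mem_bipartiteAbove]
      refine ⟨Finset.mem_filter.2 ⟨Finset.mem_univ _, ?_, ?_⟩, Finset.subset_insert _ _⟩
      · rw [Finset.card_insert_of_notMem hva, hac]
      · intro w
        rcases hadom w with hw | ⟨u, hu, huw⟩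
        · exact Or.inl (Finset.mem_insert_of_mem hw)
        · exact Or.inr ⟨u, Finset.mem_insert_of_mem hu, huw⟩
    calc n - i = (Finset.univ \ a).card := by
          rw [Finset.card_sdiff_of_subset (Finset.subset_univ a), Finset.card_univ, hac]
      _ = ((Finset.univ \ a).image (fun v => insert v a)).card := by
          rw [Finset.card_image_of_injOn]
          intro v hv w hw hvw
          have hva : v ∉ a := by simp at hv; exact hv
          have : v ∈ insert w a := by
            have h0 : insert v a = insert w a := hvw
            rw [← h0]; exact Finset.mem_insert_self v a
          rcases Finset.mem_insert.1 this with h | h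
          · exact h
          · exact absurd h hva
      _ ≤ _ := Finset.card_le_card hsub
  · -- each dominating set of size i+1 has ≤ i+1 dominating subsets of size i
    intro b hb
    rw [Finset.mem_filter] at hb
    obtain ⟨-, hbc, -⟩ := hb
    have hsub : Finset.bipartiteBelow (fun a b => a ⊆ b) (D i) b ⊆ b.powersetCard i := by
      intro a ha
      rw [Finset.mem_bipartiteBelow] at ha
      obtain ⟨ha1, ha2⟩ := ha
      rw [hD, Finset.mem_filter] at ha1
      exact Finset.mem_powersetCard.2 ⟨ha2, ha1.2.1⟩
    calc (Finset.bipartiteBelow (fun a b => a ⊆ b) (D i) b).card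
        ≤ (b.powersetCard i).card := Finset.card_le_card hsub
      _ = (i + 1).choose i := by rw [Finset.card_powersetCard, hbc]
      _ = i + 1 := Nat.choose_succ_self_right i

/-- If `k ≥ n/2` and `d_k(G)/C(n,k) ≥ (n-k)/(k+1)`, then the sequence `d_i(G)` is
non-increasing from `k` on. -/
theorem stmt_11 {V : Type*} [Fintype V] (G : SimpleGraph V) (k : ℕ)
    (hk : (Fintype.card V : ℝ) / 2 ≤ k)
    (h : ((Fintype.card V : ℝ) - k) / (k + 1) ≤
      (domCount G k : ℝ) / (Fintype.card V).choose k) :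
    ∀ i, k ≤ i → domCount G (i + 1) ≤ domCount G i := by
  classical
  set n := Fintype.card V with hn
  intro i hi
  -- trivial case: i ≥ n
  by_cases hin : n ≤ i
  · have : domCount G (i + 1) ≤ n.choose (i + 1) := domCount_le_choose G (i + 1)
    rw [Nat.choose_eq_zero_of_lt (by omega)] at this
    omega
  push_neg at hin
  have hkn : k ≤ n := le_trans hi (le_of_lt hin)
  -- hypothesis in ℕ form
  have hCk : 0 < n.choose k := Nat.choose_pos hkn
  have H : (n - k) * n.choose k ≤ domCount G k * (k + 1) := by
    have h' : ((n : ℝ) - k) * n.choose k ≤ (domCount G k : ℝ) * (k + 1) :=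
      (div_le_div_iff₀ (by positivity) (by exact_mod_cast hCk)).1 h
    have hcast : ((n : ℝ) - k) = ((n - k : ℕ) : ℝ) := by
      rw [Nat.cast_sub hkn]
    rw [hcast] at h'
    exact_mod_cast h'
  -- monotonicity of the ratio
  have M : ∀ j, k ≤ j → domCount G k * n.choose j ≤ domCount G j * n.choose k := by
    intro j hj
    induction j, hj using Nat.le_induction with
    | base => rw [mul_comm]
    | succ j hj ih =>
      have hA := domCount_mul_le G j
      have key : domCount G k * n.choose (j + 1) * (j + 1) ≤
          domCount G (j + 1) * n.choose k * (j + 1) := by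
        calc domCount G k * n.choose (j + 1) * (j + 1)
            = domCount G k * (n.choose (j + 1) * (j + 1)) := by ring
          _ = domCount G k * (n.choose j * (n - j)) := by rw [Nat.choose_succ_right_eq]
          _ = (domCount G k * n.choose j) * (n - j) := by ring
          _ ≤ (domCount G j * n.choose k) * (n - j) := mul_le_mul_left ih _
          _ = (domCount G j * (n - j)) * n.choose k := by ring
          _ ≤ (domCount G (j + 1) * (j + 1)) * n.choose k := mul_le_mul_left hA _
          _ = domCount G (j + 1) * n.choose k * (j + 1) := by ring
      exact Nat.le_of_mul_le_mul_right key (Nat.succ_pos j)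
  have Mi := M i hi
  have B : domCount G (i + 1) ≤ n.choose (i + 1) := domCount_le_choose G (i + 1)
  have key : domCount G (i + 1) * ((i + 1) * (k + 1) * n.choose k) ≤
      domCount G i * ((i + 1) * (k + 1) * n.choose k) := by
    calc domCount G (i + 1) * ((i + 1) * (k + 1) * n.choose k)
        ≤ n.choose (i + 1) * ((i + 1) * (k + 1) * n.choose k) := mul_le_mul_left B _
      _ = (n.choose (i + 1) * (i + 1)) * ((k + 1) * n.choose k) := by ring
      _ = (n.choose i * (n - i)) * ((k + 1) * n.choose k) := by rw [Nat.choose_succ_right_eq]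
      _ = ((n - i) * (k + 1)) * (n.choose i * n.choose k) := by ring
      _ ≤ ((n - k) * (i + 1)) * (n.choose i * n.choose k) := by
          exact mul_le_mul_left (Nat.mul_le_mul (by omega) (by omega)) _
      _ = ((n - k) * n.choose k) * (n.choose i * (i + 1)) := by ring
      _ ≤ (domCount G k * (k + 1)) * (n.choose i * (i + 1)) := mul_le_mul_left H _
      _ = (domCount G k * n.choose i) * ((k + 1) * (i + 1)) := by ring
      _ ≤ (domCount G i * n.choose k) * ((k + 1) * (i + 1)) := mul_le_mul_left Mi _
      _ = domCount G i * ((i + 1) * (k + 1) * n.choose k) := by ring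
  exact Nat.le_of_mul_le_mul_right key (by positivity)
end

section
/- Let G be a graph on n vertices. If d_{⌈n/2⌉}(G)/C(n,⌈n/2⌉) ≥ (n−⌈n/2⌉)/(⌈n/2⌉+1), then the domination polynomial of G is unimodal with mode ⌈n/2⌉. -/
namespace DomAux

open Finset

variable {V : Type*} [Fintype V]

open Classical in
/-- The finset of dominating sets of cardinality `i`. -/
noncomputable def DF (G : SimpleGraph V) (i : ℕ) : Finset (Finset V) :=
  Finset.univ.filter (fun s => s.card = i ∧ ∀ v, v ∈ s ∨ ∃ u ∈ s, G.Adj u v)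

open Classical in
lemma domCount_eq (G : SimpleGraph V) (i : ℕ) : domCount G i = (DF G i).card := by
  rw [domCount, DF, Nat.card_eq_fintype_card, Fintype.card_subtype]

lemma mem_DF {G : SimpleGraph V} {i : ℕ} {s : Finset V} :
    s ∈ DF G i ↔ s.card = i ∧ ∀ v, v ∈ s ∨ ∃ u ∈ s, G.Adj u v := by
  classical
  simp [DF]

/-- Local LYM for the upset of dominating sets. -/
lemma key (G : SimpleGraph V) (i : ℕ) :
    (Fintype.card V - i) * domCount G i ≤ (i + 1) * domCount G (i + 1) := by
  classical
  rw [domCount_eq, domCount_eq, mul_comm, mul_comm (i + 1)]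
  refine Finset.card_mul_le_card_mul (fun A B => A ⊆ B) ?_ ?_
  · intro A hA
    rw [mem_DF] at hA
    obtain ⟨hAcard, hAdom⟩ := hA
    have himg : ((Finset.univ \ A).image (fun v => insert v A)) ⊆
        (DF G (i + 1)).filter (fun B => A ⊆ B) := by
      intro B hB
      simp only [Finset.mem_image, Finset.mem_sdiff, Finset.mem_univ, true_and] at hB
      obtain ⟨v, hv, rfl⟩ := hB
      rw [Finset.mem_filter, mem_DF]
      refine ⟨⟨by rw [Finset.card_insert_of_notMem hv, hAcard], ?_⟩, Finset.subset_insert _ _⟩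
      intro w
      rcases hAdom w with hw | ⟨u, hu, hadj⟩
      · exact Or.inl (Finset.mem_insert_of_mem hw)
      · exact Or.inr ⟨u, Finset.mem_insert_of_mem hu, hadj⟩
    have hinj : Set.InjOn (fun v => insert v A) (Finset.univ \ A : Finset V) := by
      intro u hu v hv huv
      simp only [Finset.coe_sdiff, Finset.coe_univ, Set.mem_diff, Finset.mem_coe] at hu hv
      have huv' : insert u A = insert v A := huv
      have : u ∈ insert v A := by rw [← huv']; exact Finset.mem_insert_self u A
      rcases Finset.mem_insert.mp this with h' | h'
      · exact h'
      · exact absurd h' hu.2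
    calc Fintype.card V - i = (Finset.univ \ A).card := by
            rw [Finset.card_sdiff_of_subset (Finset.subset_univ A), Finset.card_univ, hAcard]
      _ = ((Finset.univ \ A).image (fun v => insert v A)).card :=
            (Finset.card_image_of_injOn hinj).symm
      _ ≤ _ := Finset.card_le_card himg
  · intro B hB
    rw [mem_DF] at hB
    have hsub : (DF G i).filter (fun A => A ⊆ B) ⊆ B.powersetCard i := by
      intro A hA
      rw [Finset.mem_filter, mem_DF] at hA
      exact Finset.mem_powersetCard.mpr ⟨hA.2, hA.1.1⟩
    calc ((DF G i).filter (fun A => A ⊆ B)).card ≤ (B.powersetCard i).card :=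
          Finset.card_le_card hsub
      _ = (i + 1).choose i := by rw [Finset.card_powersetCard, hB.1]
      _ = i + 1 := Nat.choose_succ_self_right i

lemma dle (G : SimpleGraph V) (i : ℕ) : domCount G i ≤ (Fintype.card V).choose i := by
  classical
  rw [domCount_eq]
  calc (DF G i).card ≤ ((Finset.univ : Finset V).powersetCard i).card := by
        refine Finset.card_le_card ?_
        intro s hs
        rw [mem_DF] at hs
        exact Finset.mem_powersetCard.mpr ⟨Finset.subset_univ s, hs.1⟩
    _ = (Fintype.card V).choose i := by rw [Finset.card_powersetCard, Finset.card_univ]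

lemma dzero (G : SimpleGraph V) {j : ℕ} (hj : Fintype.card V < j) : domCount G j = 0 := by
  have := dle G j
  rwa [Nat.choose_eq_zero_of_lt hj, Nat.le_zero] at this

/-- Normalized counts increase: `d_k / C(n,k) ≤ d_i / C(n,i)` for `k ≤ i`, cross-multiplied. -/
lemma ratio_mono (G : SimpleGraph V) (k : ℕ) :
    ∀ i, k ≤ i → domCount G k * (Fintype.card V).choose i ≤
      domCount G i * (Fintype.card V).choose k := by
  intro i hki
  induction i with
  | zero =>
      have : k = 0 := Nat.le_zero.mp hki
      subst this; exact le_refl _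
  | succ i ih =>
      rcases Nat.lt_or_ge i k with hik | hik
      · have : k = i + 1 := by omega
        subst this; exact le_refl _
      · have IH := ih hik
        set n := Fintype.card V with hn
        rcases Nat.lt_or_ge i n with hin | hin
        · -- i < n, so C(n,i) > 0
          have hpos : 0 < (i + 1) * n.choose i :=
            Nat.mul_pos (Nat.succ_pos i) (Nat.choose_pos (le_of_lt hin))
          refine Nat.le_of_mul_le_mul_right ?_ hpos
          have hid : n.choose (i + 1) * (i + 1) = n.choose i * (n - i) :=
            Nat.choose_succ_right_eq n i
          calc domCount G k * n.choose (i + 1) * ((i + 1) * n.choose i)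
              = (domCount G k * n.choose i) * (n.choose (i + 1) * (i + 1)) := by ring
            _ = (domCount G k * n.choose i) * (n.choose i * (n - i)) := by rw [hid]
            _ ≤ (domCount G i * n.choose k) * (n.choose i * (n - i)) :=
                Nat.mul_le_mul_right _ IH
            _ = (n.choose k * n.choose i) * ((n - i) * domCount G i) := by ring
            _ ≤ (n.choose k * n.choose i) * ((i + 1) * domCount G (i + 1)) :=
                Nat.mul_le_mul_left _ (key G i)
            _ = domCount G (i + 1) * n.choose k * ((i + 1) * n.choose i) := by ring
        · -- n ≤ i, so C(n, i+1) = 0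
          have : n.choose (i + 1) = 0 := Nat.choose_eq_zero_of_lt (by omega)
          rw [this, Nat.mul_zero]
          exact Nat.zero_le _

end DomAux

/-- If `d_{⌈n/2⌉}(G)/C(n,⌈n/2⌉) ≥ (n-⌈n/2⌉)/(⌈n/2⌉+1)`, then the domination
polynomial of `G` is unimodal with mode `⌈n/2⌉`.  (Here `⌈n/2⌉ = (n+1)/2` with
natural-number division.) -/
theorem stmt_12 {V : Type*} [Fintype V] (G : SimpleGraph V)
    (h : ((Fintype.card V : ℝ) - (((Fintype.card V + 1) / 2 : ℕ) : ℝ)) /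
        ((((Fintype.card V + 1) / 2 : ℕ) : ℝ) + 1) ≤
      (domCount G ((Fintype.card V + 1) / 2) : ℝ) /
        (Fintype.card V).choose ((Fintype.card V + 1) / 2)) :
    (∀ i, i < (Fintype.card V + 1) / 2 → domCount G i ≤ domCount G (i + 1)) ∧
      (∀ i, (Fintype.card V + 1) / 2 ≤ i → domCount G (i + 1) ≤ domCount G i) := by
  set n := Fintype.card V with hn
  set k := (n + 1) / 2 with hk
  constructor
  · intro i hi
    have h2 : i + 1 ≤ n - i := by omega
    have hkey := DomAux.key G i
    have : (i + 1) * domCount G i ≤ (i + 1) * domCount G (i + 1) :=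
      le_trans (Nat.mul_le_mul_right _ h2) hkey
    exact Nat.le_of_mul_le_mul_left this (Nat.succ_pos i)
  · intro i hi
    rcases Nat.lt_or_ge i n with hin | hin
    · -- k ≤ i < n
      have hkn : k ≤ n := le_trans hi (le_of_lt hin)
      have hCk : 0 < n.choose k := Nat.choose_pos hkn
      -- convert the hypothesis to ℕ
      have hnat : (n - k) * n.choose k ≤ (k + 1) * domCount G k := by
        rw [div_le_div_iff₀ (by positivity) (by exact_mod_cast hCk)] at h
        have hcast : ((n - k : ℕ) : ℝ) * (n.choose k : ℝ) ≤
            (domCount G k : ℝ) * ((k : ℝ) + 1) := by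
          rw [Nat.cast_sub hkn]; exact h
        have : ((n - k) * n.choose k : ℕ) ≤ (domCount G k * (k + 1) : ℕ) := by
          exact_mod_cast hcast
        exact this.trans (le_of_eq (mul_comm _ _))
      have hQ := DomAux.ratio_mono G k i hi
      -- (n - k) * C(n,i) ≤ (k+1) * d_i, by cancelling C(n,k)
      have hstep : (n - k) * n.choose i ≤ (k + 1) * domCount G i := by
        refine Nat.le_of_mul_le_mul_right ?_ hCk
        calc (n - k) * n.choose i * n.choose k
            = ((n - k) * n.choose k) * n.choose i := by ring
          _ ≤ ((k + 1) * domCount G k) * n.choose i := Nat.mul_le_mul_right _ hnat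
          _ = (k + 1) * (domCount G k * n.choose i) := by ring
          _ ≤ (k + 1) * (domCount G i * n.choose k) := Nat.mul_le_mul_left _ hQ
          _ = (k + 1) * domCount G i * n.choose k := by ring
      -- C(n, i+1) ≤ d_i
      have hfin : n.choose (i + 1) ≤ domCount G i := by
        have hpos : 0 < (k + 1) * (i + 1) := by positivity
        refine Nat.le_of_mul_le_mul_left ?_ hpos
        have hid : n.choose (i + 1) * (i + 1) = n.choose i * (n - i) :=
          Nat.choose_succ_right_eq n i
        have hcross : (k + 1) * (n - i) ≤ (i + 1) * (n - k) :=
          Nat.mul_le_mul (by omega) (by omega)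
        calc (k + 1) * (i + 1) * n.choose (i + 1)
            = (k + 1) * (n.choose (i + 1) * (i + 1)) := by ring
          _ = (k + 1) * (n.choose i * (n - i)) := by rw [hid]
          _ = ((k + 1) * (n - i)) * n.choose i := by ring
          _ ≤ ((i + 1) * (n - k)) * n.choose i := Nat.mul_le_mul_right _ hcross
          _ = (i + 1) * ((n - k) * n.choose i) := by ring
          _ ≤ (i + 1) * ((k + 1) * domCount G i) := Nat.mul_le_mul_left _ hstep
          _ = (k + 1) * (i + 1) * domCount G i := by ring
      exact le_trans (DomAux.dle G (i + 1)) hfin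
    · -- n ≤ i, so d_{i+1} = 0
      rw [DomAux.dzero G (show n < i + 1 by omega)]
      exact Nat.zero_le _
end

section
/- For a graph G on n vertices with minimum degree δ, the proportion of dominating i-subsets satisfies r_i(G) = d_i(G)/C(n,i) ≥ 1 − (n−i)·((n−i)/n)^δ, for 0 ≤ i ≤ n−δ−1. -/
lemma key_nat (n i : ℕ) : ∀ δ : ℕ, i + δ + 1 ≤ n →
    n ^ (δ + 1) * (n - δ - 1).choose i ≤ (n - i) ^ (δ + 1) * n.choose i := by
  intro δ
  induction δ with
  | zero =>
    intro h
    have h1 : 1 ≤ n := by omega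
    have hc := Nat.choose_mul_succ_eq (n - 1) i
    rw [Nat.sub_add_cancel h1] at hc
    simp only [zero_add, pow_one, Nat.sub_zero]
    rw [mul_comm, hc, mul_comm]
  | succ δ ih =>
    intro h
    have ih' := ih (by omega)
    set m := n - δ - 1 with hm
    have hm1 : i + 1 ≤ m := by omega
    have hB : n * (m - 1).choose i ≤ (n - i) * m.choose i := by
      have hc : (m - 1).choose i * m = m.choose i * (m - i) := by
        have := Nat.choose_mul_succ_eq (m - 1) i
        rwa [Nat.sub_add_cancel (by omega : 1 ≤ m)] at this
      have h2 : n * (m - i) ≤ (n - i) * m := by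
        have h3 : i * m ≤ n * i := by
          rw [mul_comm]; exact Nat.mul_le_mul_right i (by omega)
        rw [Nat.mul_sub, Nat.sub_mul]
        omega
      have : n * (m - 1).choose i * m ≤ (n - i) * m.choose i * m := by
        calc n * (m - 1).choose i * m = n * ((m - 1).choose i * m) := by ring
          _ = n * (m.choose i * (m - i)) := by rw [hc]
          _ = m.choose i * (n * (m - i)) := by ring
          _ ≤ m.choose i * ((n - i) * m) := Nat.mul_le_mul_left _ h2
          _ = (n - i) * m.choose i * m := by ring
      exact Nat.le_of_mul_le_mul_right this (by omega)
    have hstep : n - (δ + 1) - 1 = m - 1 := by omega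
    calc n ^ (δ + 1 + 1) * (n - (δ + 1) - 1).choose i
        = n ^ (δ + 1) * (n * (m - 1).choose i) := by rw [hstep]; ring
      _ ≤ n ^ (δ + 1) * ((n - i) * m.choose i) :=
          Nat.mul_le_mul_left _ hB
      _ = (n - i) * (n ^ (δ + 1) * m.choose i) := by ring
      _ ≤ (n - i) * ((n - i) ^ (δ + 1) * n.choose i) :=
          Nat.mul_le_mul_left _ ih'
      _ = (n - i) ^ (δ + 1 + 1) * n.choose i := by ring

/-- For a graph `G` on `n` vertices with minimum degree `δ` and `0 ≤ i ≤ n-δ-1`,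
the proportion of dominating `i`-subsets satisfies
`r_i(G) ≥ 1 - (n-i)·((n-i)/n)^δ`. -/
theorem stmt_14 {V : Type*} [Fintype V] (G : SimpleGraph V) [DecidableRel G.Adj]
    (δ : ℕ) (hδ : ∀ v : V, δ ≤ G.degree v) (i : ℕ)
    (hi : i + δ + 1 ≤ Fintype.card V) :
    1 - ((Fintype.card V : ℝ) - i) *
        (((Fintype.card V : ℝ) - i) / Fintype.card V) ^ δ ≤
      (domCount G i : ℝ) / (Fintype.card V).choose i := by
  classical
  set N := Fintype.card V with hN
  have hNpos : 0 < N := by omega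
  set T : Finset (Finset V) := Finset.powersetCard i Finset.univ with hT
  set P : Finset V → Prop := fun s => ∀ v, v ∈ s ∨ ∃ u ∈ s, G.Adj u v with hP
  -- domCount as a filter card
  have hd : domCount G i = (T.filter P).card := by
    rw [domCount, Nat.card_eq_fintype_card, Fintype.card_subtype]
    congr 1
    ext s
    simp [hT, hP, Finset.mem_powersetCard, and_comm]
  have hTcard : T.card = N.choose i := by
    rw [hT, Finset.card_powersetCard, Finset.card_univ]
  -- bound on non-dominating sets
  have hND : (T.filter fun s => ¬ P s).card ≤ N * (N - δ - 1).choose i := by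
    have hsub : (T.filter fun s => ¬ P s) ⊆
        Finset.univ.biUnion
          (fun v => Finset.powersetCard i (insert v (G.neighborFinset v))ᶜ) := by
      intro s hs
      simp only [Finset.mem_filter, hT, Finset.mem_powersetCard, hP] at hs
      push_neg at hs
      obtain ⟨⟨-, hcard⟩, v, hv, hadj⟩ := hs
      refine Finset.mem_biUnion.2 ⟨v, Finset.mem_univ v, ?_⟩
      rw [Finset.mem_powersetCard]
      refine ⟨fun u hu => ?_, hcard⟩
      simp only [Finset.mem_compl, Finset.mem_insert, SimpleGraph.mem_neighborFinset]
      push_neg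
      exact ⟨fun h => hv (h ▸ hu), fun h => hadj u hu h.symm⟩
    calc (T.filter fun s => ¬ P s).card
        ≤ ∑ v : V, (Finset.powersetCard i (insert v (G.neighborFinset v))ᶜ).card :=
          le_trans (Finset.card_le_card hsub) (Finset.card_biUnion_le)
      _ ≤ ∑ _v : V, (N - δ - 1).choose i := by
          refine Finset.sum_le_sum fun v _ => ?_
          rw [Finset.card_powersetCard, Finset.card_compl,
            Finset.card_insert_of_notMem (by simp), SimpleGraph.card_neighborFinset_eq_degree]
          rw [← hN]
          exact Nat.choose_le_choose i (by have := hδ v; omega)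
      _ = N * (N - δ - 1).choose i := by
          rw [Finset.sum_const, Finset.card_univ, smul_eq_mul]
  have hsplit : (T.filter P).card + (T.filter fun s => ¬ P s).card = N.choose i := by
    rw [Finset.card_filter_add_card_filter_not, hTcard]
  -- real analysis part
  have hCpos : 0 < (N.choose i : ℝ) := by
    exact_mod_cast Nat.choose_pos (by omega : i ≤ N)
  have hNr : (0:ℝ) < (N:ℝ) := by exact_mod_cast hNpos
  have hkey := key_nat N i δ (by omega)
  have hkeyR : (N:ℝ) * (N - δ - 1).choose i ≤
      ((N:ℝ) - i) * (((N:ℝ) - i) / N) ^ δ * N.choose i := by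
    have hcast : ((N - i : ℕ) : ℝ) = (N:ℝ) - i := by
      rw [Nat.cast_sub (by omega : i ≤ N)]
    have hkR : (N:ℝ) ^ (δ + 1) * (N - δ - 1).choose i ≤
        ((N:ℝ) - i) ^ (δ + 1) * N.choose i := by
      have h2 := Nat.cast_le (α := ℝ).2 hkey
      push_cast at h2
      rw [hcast] at h2
      exact h2
    have h1 : ((N:ℝ) - i) * (((N:ℝ) - i) / N) ^ δ * N.choose i
        = (((N:ℝ) - i) ^ (δ + 1) * N.choose i) / (N:ℝ) ^ δ := by
      rw [div_pow]
      ring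
    rw [h1, le_div_iff₀ (by positivity : (0:ℝ) < (N:ℝ) ^ δ)]
    calc (N:ℝ) * ((N - δ - 1).choose i : ℝ) * (N:ℝ) ^ δ
        = (N:ℝ) ^ (δ + 1) * (N - δ - 1).choose i := by ring
      _ ≤ ((N:ℝ) - i) ^ (δ + 1) * N.choose i := hkR
  rw [hd, le_div_iff₀ hCpos]
  have hndR : ((T.filter fun s => ¬ P s).card : ℝ) ≤ (N:ℝ) * (N - δ - 1).choose i := by
    exact_mod_cast hND
  have hdR : ((T.filter P).card : ℝ) = (N.choose i : ℝ) - (T.filter fun s => ¬ P s).card := by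
    have := hsplit
    have : ((T.filter P).card : ℝ) + ((T.filter fun s => ¬ P s).card : ℝ) = (N.choose i : ℝ) := by
      exact_mod_cast this
    linarith
  nlinarith [hkeyR, hndR, hdR, hCpos]
end

section
/- For any graph G on n vertices and any 0 ≤ i < n/2, d_i(G) ≤ d_{i+1}(G), where d_i(G) is the number of dominating sets of cardinality i. -/
/-- For any graph `G` on `n` vertices and `0 ≤ i < n/2`, `d_i(G) ≤ d_{i+1}(G)`. -/
theorem stmt_18 {V : Type*} [Fintype V] (G : SimpleGraph V) (i : ℕ)
    (hi : 2 * i < Fintype.card V) :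
    domCount G i ≤ domCount G (i + 1) := by
  classical
  set n := Fintype.card V with hn
  set Dom : Finset V → Prop := fun s => ∀ v, v ∈ s ∨ ∃ u ∈ s, G.Adj u v with hDom
  have hcount : ∀ j, domCount G j =
      (Finset.univ.filter (fun s : Finset V => s.card = j ∧ Dom s)).card := by
    intro j
    rw [domCount, Nat.card_eq_fintype_card, Fintype.card_subtype]
  set A := Finset.univ.filter (fun s : Finset V => s.card = i ∧ Dom s) with hA
  set B := Finset.univ.filter (fun s : Finset V => s.card = i + 1 ∧ Dom s) with hB
  have key : A.card * (n - i) ≤ B.card * (i + 1) := by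
    apply Finset.card_mul_le_card_mul (fun s t => s ⊆ t)
    · intro S hS
      simp only [hA, Finset.mem_filter] at hS
      obtain ⟨-, hcard, hdom⟩ := hS
      have : (Finset.univ \ S).card ≤ (B.bipartiteAbove (fun s t => s ⊆ t) S).card := by
        apply Finset.card_le_card_of_injOn (fun v => insert v S)
        · intro v hv
          simp only [Finset.mem_coe, Finset.mem_sdiff, Finset.mem_univ, true_and] at hv
          simp only [Finset.mem_coe, Finset.bipartiteAbove, hB, Finset.mem_filter, Finset.mem_univ, true_and]
          refine ⟨⟨?_, ?_⟩, Finset.subset_insert _ _⟩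
          · rw [Finset.card_insert_of_notMem hv, hcard]
          · intro w
            rcases hdom w with h | ⟨u, hu, hadj⟩
            · exact Or.inl (Finset.mem_insert_of_mem h)
            · exact Or.inr ⟨u, Finset.mem_insert_of_mem hu, hadj⟩
        · intro a ha b hb hab
          have ha' : a ∉ S := by simpa using ha
          have hab' : insert a S = insert b S := hab
          have : a ∈ insert b S := hab' ▸ Finset.mem_insert_self a S
          rcases Finset.mem_insert.mp this with h | h
          · exact h
          · exact absurd h ha'
      calc n - i = (Finset.univ \ S).card := by
            rw [Finset.card_univ_diff, hcard]
        _ ≤ _ := this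
    · intro T hT
      simp only [hB, Finset.mem_filter] at hT
      obtain ⟨-, hcard, -⟩ := hT
      have : (A.bipartiteBelow (fun s t => s ⊆ t) T) ⊆ T.powersetCard i := by
        intro S hS
        simp only [Finset.bipartiteBelow, hA, Finset.mem_filter] at hS
        rw [Finset.mem_powersetCard]
        exact ⟨hS.2, hS.1.2.1⟩
      calc (A.bipartiteBelow (fun s t => s ⊆ t) T).card ≤ (T.powersetCard i).card :=
            Finset.card_le_card this
        _ = (i + 1).choose i := by rw [Finset.card_powersetCard, hcard]
        _ = i + 1 := Nat.choose_succ_self_right i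
  have hin : i + 1 ≤ n - i := by omega
  have h1 : A.card * (n - i) ≤ B.card * (n - i) :=
    key.trans (Nat.mul_le_mul_left _ hin)
  have hpos : 0 < n - i := by omega
  have := Nat.le_of_mul_le_mul_right h1 hpos
  rw [hcount i, hcount (i + 1)]
  exact this
end

section
/- If a polynomial f with positive coefficients has all real roots, writing avd = f'(1)/f(1), then the coefficient sequence of f is unimodal with mode at ⌊avd⌋ or ⌈avd⌉. -/
set_option maxHeartbeats 1000000

open Polynomial Finset

namespace Darroch

variable {N : ℕ}

/-- Poisson-binomial pmf-style symmetric function, with `ℤ` index (0 for negative). -/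
noncomputable def AZ (s : Finset (Fin N)) (m : ℤ) (τ : Fin N → ℝ) : ℝ :=
  if 0 ≤ m then
    ∑ T ∈ s.powersetCard m.toNat, (∏ i ∈ T, τ i) * ∏ i ∈ s \ T, (1 - τ i)
  else 0

lemma AZ_neg {s : Finset (Fin N)} {m : ℤ} (hm : m < 0) (τ : Fin N → ℝ) :
    AZ s m τ = 0 := by
  simp [AZ, not_le.2 hm]

lemma AZ_congr {s : Finset (Fin N)} {m : ℤ} {τ₁ τ₂ : Fin N → ℝ}
    (h : ∀ i ∈ s, τ₁ i = τ₂ i) : AZ s m τ₁ = AZ s m τ₂ := by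
  unfold AZ
  split
  · refine Finset.sum_congr rfl fun T hT => ?_
    have hTs : T ⊆ s := (Finset.mem_powersetCard.1 hT).1
    refine congrArg₂ (· * ·) (Finset.prod_congr rfl fun i hi => h i (hTs hi))
      (Finset.prod_congr rfl fun i hi => by rw [h i (Finset.mem_sdiff.1 hi).1])
  · rfl

lemma AZ_empty (m : ℤ) (τ : Fin N → ℝ) :
    AZ (∅ : Finset (Fin N)) m τ = if m = 0 then 1 else 0 := by
  rcases lt_trichotomy m 0 with h | h | h
  · rw [AZ_neg h]; simp [h.ne]
  · subst h; simp [AZ, Finset.powersetCard_zero]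
  · have h0 : (∅ : Finset (Fin N)).card < m.toNat := by simp; omega
    rw [AZ, if_pos h.le, Finset.powersetCard_eq_empty.2 h0]
    simp [h.ne']

lemma AZ_card_lt {s : Finset (Fin N)} {m : ℤ} (hm : (s.card : ℤ) < m) (τ : Fin N → ℝ) :
    AZ s m τ = 0 := by
  have h0 : s.card < m.toNat := by omega
  rw [AZ, if_pos (by omega), Finset.powersetCard_eq_empty.2 h0, Finset.sum_empty]

lemma AZ_nonneg {s : Finset (Fin N)} {m : ℤ} {τ : Fin N → ℝ}
    (h0 : ∀ i ∈ s, 0 ≤ τ i) (h1 : ∀ i ∈ s, τ i ≤ 1) : 0 ≤ AZ s m τ := by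
  unfold AZ
  split
  · refine Finset.sum_nonneg fun T hT => ?_
    have hTs : T ⊆ s := (Finset.mem_powersetCard.1 hT).1
    refine mul_nonneg (Finset.prod_nonneg fun i hi => h0 i (hTs hi))
      (Finset.prod_nonneg fun i hi => ?_)
    have := h1 i (Finset.mem_sdiff.1 hi).1
    linarith
  · exact le_refl 0

/-- The fundamental recurrence. -/
lemma AZ_insert {s : Finset (Fin N)} {i : Fin N} (hi : i ∉ s) (m : ℤ) (τ : Fin N → ℝ) :
    AZ (insert i s) m τ = τ i * AZ s (m - 1) τ + (1 - τ i) * AZ s m τ := by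
  rcases lt_trichotomy m 0 with h | h | h
  · rw [AZ_neg h, AZ_neg h, AZ_neg (by omega), mul_zero, mul_zero, add_zero]
  · subst h
    rw [AZ_neg (show (0:ℤ)-1 < 0 by norm_num), mul_zero, zero_add]
    rw [AZ, AZ, if_pos le_rfl, if_pos le_rfl]
    rw [show (0:ℤ).toNat = 0 from rfl, Finset.powersetCard_zero, Finset.powersetCard_zero]
    rw [Finset.sum_singleton, Finset.sum_singleton, Finset.prod_empty, one_mul, one_mul,
      Finset.sdiff_empty, Finset.sdiff_empty, Finset.prod_insert hi]
  · -- m ≥ 1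
    obtain ⟨n, rfl⟩ : ∃ n : ℕ, m = (n : ℤ) + 1 := ⟨(m - 1).toNat, by omega⟩
    rw [AZ, AZ, AZ, if_pos (by omega), if_pos (by omega), if_pos (by omega)]
    have ht1 : ((n : ℤ) + 1).toNat = n + 1 := by omega
    have ht2 : ((n : ℤ) + 1 - 1).toNat = n := by omega
    rw [ht1, ht2]
    have hdisj : Disjoint (Finset.powersetCard (n+1) s)
        ((Finset.powersetCard n s).image (insert i)) := by
      rw [Finset.disjoint_left]
      intro T hT hT'
      obtain ⟨hTs, _⟩ := Finset.mem_powersetCard.1 hT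
      obtain ⟨T', hT', rfl⟩ := Finset.mem_image.1 hT'
      exact hi (hTs (Finset.mem_insert_self i T'))
    have h1 : ∑ T ∈ Finset.powersetCard (n+1) s,
        (∏ j ∈ T, τ j) * ∏ j ∈ insert i s \ T, (1 - τ j)
        = (1 - τ i) * ∑ T ∈ s.powersetCard (n+1), (∏ j ∈ T, τ j) * ∏ j ∈ s \ T, (1 - τ j) := by
      rw [Finset.mul_sum]
      refine Finset.sum_congr rfl fun T hT => ?_
      obtain ⟨hTs, hcard⟩ := Finset.mem_powersetCard.1 hT
      have hiT : i ∉ T := fun h => hi (hTs h)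
      have hss : insert i s \ T = insert i (s \ T) := by
        rw [Finset.insert_sdiff_of_notMem _ hiT]
      rw [hss, Finset.prod_insert (by simp [hi])]
      ring
    have h2 : ∑ T ∈ (Finset.powersetCard n s).image (insert i),
        (∏ j ∈ T, τ j) * ∏ j ∈ insert i s \ T, (1 - τ j)
        = τ i * ∑ T ∈ s.powersetCard n, (∏ j ∈ T, τ j) * ∏ j ∈ s \ T, (1 - τ j) := by
      rw [Finset.sum_image, Finset.mul_sum]
      · refine Finset.sum_congr rfl fun T hT => ?_
        obtain ⟨hTs, hcard⟩ := Finset.mem_powersetCard.1 hT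
        have hiT : i ∉ T := fun h => hi (hTs h)
        have hss : insert i s \ insert i T = s \ T := by
          ext x
          simp only [Finset.mem_sdiff, Finset.mem_insert]
          constructor
          · rintro ⟨hx1 | hx1, hx2⟩
            · exact (hx2 (Or.inl hx1)).elim
            · exact ⟨hx1, fun hx => hx2 (Or.inr hx)⟩
          · rintro ⟨hx1, hx2⟩
            refine ⟨Or.inr hx1, ?_⟩
            rintro (rfl | hx)
            · exact hi hx1
            · exact hx2 hx
        rw [hss, Finset.prod_insert hiT]
        ring
      · intro a ha b hb hab
        have haT : i ∉ a := fun h => hi ((Finset.mem_powersetCard.1 ha).1 h)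
        have hbT : i ∉ b := fun h => hi ((Finset.mem_powersetCard.1 hb).1 h)
        have := congrArg (Finset.erase · i) hab
        simpa [Finset.erase_insert, haT, hbT] using this
    rw [Finset.powersetCard_succ_insert hi, Finset.sum_union hdisj, h1, h2]
    ring


/-- Binomial formula for constant weights. -/
lemma AZ_binom {x : ℝ} : ∀ (s : Finset (Fin N)) (τ : Fin N → ℝ), (∀ i ∈ s, τ i = x) →
    ∀ j : ℕ, AZ s (j : ℤ) τ = (s.card.choose j : ℝ) * x ^ j * (1 - x) ^ (s.card - j) := by
  intro s
  induction s using Finset.induction_on with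
  | empty =>
    intro τ _ j
    rw [AZ_empty]
    rcases Nat.eq_zero_or_pos j with rfl | hj
    · simp
    · have : ¬ ((j : ℤ) = 0) := by omega
      rw [if_neg this, Nat.choose_eq_zero_of_lt (by simpa using hj)]
      simp
  | @insert i s hi ih =>
    intro τ hτ j
    have hx : τ i = x := hτ i (Finset.mem_insert_self _ _)
    have hτs : ∀ i ∈ s, τ i = x := fun i hi' => hτ i (Finset.mem_insert_of_mem hi')
    rw [AZ_insert hi, Finset.card_insert_of_notMem hi, hx]
    rcases Nat.eq_zero_or_pos j with rfl | hj
    · rw [AZ_neg (by norm_num), mul_zero, zero_add, ih τ hτs 0]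
      simp [pow_succ]
      ring
    · obtain ⟨n, rfl⟩ := Nat.exists_eq_succ_of_ne_zero hj.ne'
      have : ((n+1 : ℕ) : ℤ) - 1 = (n : ℤ) := by push_cast; ring
      rw [this, ih τ hτs n, ih τ hτs (n+1)]
      rcases lt_trichotomy n s.card with h | h | h
      · -- n + 1 ≤ s.card
        have e1 : s.card - n = (s.card - (n+1)) + 1 := by omega
        have e2 : s.card + 1 - (n+1) = (s.card - (n+1)) + 1 := by omega
        rw [Nat.choose_succ_succ s.card n]
        push_cast
        rw [e1]
        simp only [Nat.succ_eq_add_one]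
        ring
      · -- n = s.card : second choose is zero
        subst h
        rw [Nat.choose_self, Nat.choose_succ_self, Nat.choose_self,
          Nat.sub_self, Nat.sub_self]
        have e2 : s.card - (s.card + 1) = 0 := by omega
        rw [e2]
        simp
        ring
      · rw [Nat.choose_eq_zero_of_lt (by omega), Nat.choose_eq_zero_of_lt (by omega),
          Nat.choose_eq_zero_of_lt (by omega)]
        simp

/-- Reflection: complementing subsets. -/
lemma AZ_reflect {s : Finset (Fin N)} {j : ℕ} (hj : j ≤ s.card) (τ : Fin N → ℝ) :
    AZ s (j : ℤ) τ = AZ s ((s.card - j : ℕ) : ℤ) (fun i => 1 - τ i) := by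
  rw [AZ, AZ, if_pos (by positivity), if_pos (by positivity)]
  rw [show ((j:ℤ)).toNat = j from rfl, show (((s.card - j : ℕ)):ℤ).toNat = s.card - j from rfl]
  refine Finset.sum_nbij' (fun T => s \ T) (fun T => s \ T) ?_ ?_ ?_ ?_ ?_
  · intro T hT
    obtain ⟨hTs, hc⟩ := Finset.mem_powersetCard.1 hT
    exact Finset.mem_powersetCard.2 ⟨Finset.sdiff_subset, by rw [Finset.card_sdiff_of_subset hTs, hc]⟩
  · intro T hT
    obtain ⟨hTs, hc⟩ := Finset.mem_powersetCard.1 hT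
    refine Finset.mem_powersetCard.2 ⟨Finset.sdiff_subset, ?_⟩
    rw [Finset.card_sdiff_of_subset hTs, hc]
    omega
  · intro T hT
    exact Finset.sdiff_sdiff_eq_self (Finset.mem_powersetCard.1 hT).1
  · intro T hT
    exact Finset.sdiff_sdiff_eq_self (Finset.mem_powersetCard.1 hT).1
  · intro T hT
    rw [Finset.sdiff_sdiff_eq_self (Finset.mem_powersetCard.1 hT).1, mul_comm]
    exact congrArg₂ (· * ·)
      (Finset.prod_congr rfl fun i _ => by ring) (Finset.prod_congr rfl fun i _ => by ring)

lemma AZ_continuous (s : Finset (Fin N)) (m : ℤ) :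
    Continuous (fun τ : Fin N → ℝ => AZ s m τ) := by
  unfold AZ
  by_cases h : 0 ≤ m
  · simp only [if_pos h]
    refine continuous_finset_sum _ fun T _ => Continuous.mul ?_ ?_
    · exact continuous_finset_prod _ fun i _ => continuous_apply i
    · exact continuous_finset_prod _ fun i _ => continuous_const.sub (continuous_apply i)
  · simp only [if_neg h]; exact continuous_const

lemma AZ_pair {t : Finset (Fin N)} {i j : Fin N} (hi : i ∉ insert j t) (hj : j ∉ t)
    (m : ℤ) (τ : Fin N → ℝ) :
    AZ (insert i (insert j t)) m τ =
      (τ i * τ j) * AZ t (m - 2) τ + (τ i + τ j - 2 * (τ i * τ j)) * AZ t (m - 1) τ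
        + (1 - (τ i + τ j) + τ i * τ j) * AZ t m τ := by
  rw [AZ_insert hi, AZ_insert hj, AZ_insert hj, show m - 1 - 1 = m - 2 by ring]
  ring

lemma binom_ratio {m k : ℕ} {x : ℝ} (h0 : 0 ≤ x) (h1 : x ≤ 1) (hmx : (m : ℝ) * x ≤ k) :
    (m.choose (k+1) : ℝ) * x ^ (k+1) * (1-x) ^ (m - (k+1)) ≤
      (m.choose k : ℝ) * x ^ k * (1-x) ^ (m - k) := by
  rcases le_or_gt (k+1) m with h | h
  · have e : m - k = (m - (k+1)) + 1 := by omega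
    have hcast : ((m - k : ℕ) : ℝ) = (m : ℝ) - k := by
      push_cast [Nat.cast_sub (by omega : k ≤ m)]; ring
    have hch : (m.choose (k+1) : ℝ) * (k+1) = (m.choose k : ℝ) * ((m : ℝ) - k) := by
      rw [← hcast]
      exact_mod_cast congrArg (Nat.cast : ℕ → ℝ) (Nat.choose_succ_right_eq m k)
    have key : ((m:ℝ) - k) * x ≤ (k+1) * (1-x) := by nlinarith
    have hpos : (0:ℝ) ≤ x ^ k * (1-x) ^ (m - (k+1)) :=
      mul_nonneg (pow_nonneg h0 _) (pow_nonneg (by linarith) _)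
    have hC0 : (0:ℝ) ≤ (m.choose k : ℝ) := by positivity
    rw [e]
    have expand1 : (m.choose (k+1):ℝ) * x^(k+1) * (1-x)^(m-(k+1))
        = ((m.choose (k+1):ℝ) * x) * (x^k * (1-x)^(m-(k+1))) := by rw [pow_succ]; ring
    have expand2 : (m.choose k:ℝ) * x^k * (1-x)^((m-(k+1))+1)
        = ((m.choose k:ℝ) * (1-x)) * (x^k * (1-x)^(m-(k+1))) := by rw [pow_succ]; ring
    rw [expand1, expand2]
    refine mul_le_mul_of_nonneg_right ?_ hpos
    have H := mul_le_mul_of_nonneg_left key hC0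
    have hk1 : (0:ℝ) < (k:ℝ) + 1 := by positivity
    rw [← mul_le_mul_iff_of_pos_right hk1]
    nlinarith [H, hch]
  · rw [Nat.choose_eq_zero_of_lt h]
    have : (0:ℝ) ≤ (m.choose k : ℝ) * x ^ k * (1-x) ^ (m-k) :=
      mul_nonneg (mul_nonneg (by positivity) (pow_nonneg h0 _)) (pow_nonneg (by linarith) _)
    simpa using this


/-- The core (Darroch) inequality: if the mean is at most `k`, the pmf decreases from `k` to
`k+1`. -/
lemma core : ∀ (n : ℕ) (s : Finset (Fin N)), s.card = n → ∀ (k : ℕ) (τ : Fin N → ℝ),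
    (∀ i ∈ s, 0 ≤ τ i) → (∀ i ∈ s, τ i ≤ 1) → (∑ i ∈ s, τ i ≤ (k : ℝ)) →
    AZ s ((k : ℤ) + 1) τ ≤ AZ s (k : ℤ) τ := by
  intro n
  induction n using Nat.strong_induction_on with
  | _ n IH =>
  intro s hcard k τ h0 h1 hsum
  classical
  -- replace τ by a version valued in [0,1] everywhere
  set τ' : Fin N → ℝ := fun i => if i ∈ s then τ i else 0 with hτ'
  have hcongr : ∀ m : ℤ, AZ s m τ = AZ s m τ' := fun m =>
    AZ_congr (fun i hi => by simp [hτ', hi])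
  rw [hcongr, hcongr]
  -- the compact set
  set K : Set (Fin N → ℝ) := Set.Icc 0 1 ∩ {σ | ∑ i ∈ s, σ i ≤ (k : ℝ)} with hK
  have hKbound : ∀ σ ∈ K, ∀ i, 0 ≤ σ i ∧ σ i ≤ 1 := by
    intro σ hσ i
    obtain ⟨h01, _⟩ := hσ
    obtain ⟨ha, hb⟩ := Set.mem_Icc.1 h01
    exact ⟨ha i, hb i⟩
  have hKsum : ∀ σ ∈ K, ∑ i ∈ s, σ i ≤ (k : ℝ) := fun σ hσ => hσ.2
  have hτ'K : τ' ∈ K := by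
    refine ⟨Set.mem_Icc.2 ⟨fun i => ?_, fun i => ?_⟩, ?_⟩
    · simp only [hτ', Pi.zero_apply]
      split
      · exact h0 i ‹_›
      · exact le_refl 0
    · simp only [hτ', Pi.one_apply]
      split
      · exact h1 i ‹_›
      · norm_num
    · show ∑ i ∈ s, τ' i ≤ (k:ℝ)
      have : ∑ i ∈ s, τ' i = ∑ i ∈ s, τ i :=
        Finset.sum_congr rfl fun i hi => by simp [hτ', hi]
      rw [this]; exact hsum
  have hKcompact : IsCompact K := by
    apply IsCompact.inter_right isCompact_Icc
    exact isClosed_le (continuous_finset_sum s fun i _ => continuous_apply i) continuous_const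
  set g : (Fin N → ℝ) → ℝ := fun σ => AZ s ((k:ℤ)+1) σ - AZ s (k:ℤ) σ with hg
  have hgcont : Continuous g := (AZ_continuous s _).sub (AZ_continuous s _)
  obtain ⟨σ', hσ'K, hmax⟩ := hKcompact.exists_isMaxOn ⟨τ', hτ'K⟩ hgcont.continuousOn
  rw [isMaxOn_iff] at hmax
  -- it suffices to show g σ' ≤ 0
  suffices hfin : g σ' ≤ 0 by
    have := hmax τ' hτ'K
    simp only [hg] at this hfin ⊢
    linarith
  -- the "extreme coordinate" lemma, using the induction hypothesis
  have extreme : ∀ σ ∈ K, (∃ i ∈ s, σ i = 0 ∨ σ i = 1) → g σ ≤ 0 := by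
    intro σ hσ ⟨i, his, hex⟩
    have hbound := hKbound σ hσ
    have hne : s.Nonempty := ⟨i, his⟩
    have hn1 : 1 ≤ n := by
      rw [← hcard]
      exact Finset.card_pos.2 hne
    have hcard' : (s.erase i).card = n - 1 := by
      rw [Finset.card_erase_of_mem his, hcard]
    have hlt : n - 1 < n := by omega
    have hseq : s = insert i (s.erase i) := (Finset.insert_erase his).symm
    have hine : i ∉ s.erase i := Finset.notMem_erase i s
    have hsum' : ∑ x ∈ s.erase i, σ x + σ i = ∑ x ∈ s, σ x :=
      Finset.sum_erase_add s σ his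
    rcases hex with hzero | hone
    · -- σ i = 0 : coordinate can be dropped
      have hAZ : ∀ m : ℤ, AZ s m σ = AZ (s.erase i) m σ := by
        intro m
        nth_rewrite 1 [hseq]
        rw [AZ_insert hine, hzero]
        ring
      have hsum2 : ∑ x ∈ s.erase i, σ x ≤ (k : ℝ) := by
        have := hKsum σ hσ
        rw [← hsum'] at this
        rw [hzero] at this
        linarith
      have := IH (n-1) hlt (s.erase i) hcard' k σ
        (fun x hx => (hbound x).1) (fun x hx => (hbound x).2) hsum2
      simp only [hg, hAZ]
      linarith
    · -- σ i = 1 : coordinate shifts the index down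
      have hAZ : ∀ m : ℤ, AZ s m σ = AZ (s.erase i) (m - 1) σ := by
        intro m
        nth_rewrite 1 [hseq]
        rw [AZ_insert hine, hone]
        ring
      have h1k : (1 : ℝ) ≤ (k : ℝ) := by
        have hle : σ i ≤ ∑ x ∈ s, σ x :=
          Finset.single_le_sum (fun x _ => (hbound x).1) his
        have := hKsum σ hσ
        rw [hone] at hle
        linarith
      have hk1 : 1 ≤ k := by exact_mod_cast h1k
      obtain ⟨K', rfl⟩ : ∃ K', k = K' + 1 := ⟨k - 1, by omega⟩
      have hsum2 : ∑ x ∈ s.erase i, σ x ≤ (K' : ℝ) := by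
        have := hKsum σ hσ
        rw [← hsum', hone] at this
        push_cast at this ⊢
        linarith
      have := IH (n-1) hlt (s.erase i) hcard' K' σ
        (fun x hx => (hbound x).1) (fun x hx => (hbound x).2) hsum2
      simp only [hg, hAZ]
      have e1 : ((K' + 1 : ℕ) : ℤ) + 1 - 1 = (K' : ℤ) + 1 := by push_cast; ring
      have e2 : ((K' + 1 : ℕ) : ℤ) - 1 = (K' : ℤ) := by push_cast; ring
      rw [e1, e2]
      linarith
  -- main case analysis on the maximizer
  have hbound := hKbound σ' hσ'K
  by_cases hex : ∃ i ∈ s, σ' i = 0 ∨ σ' i = 1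
  · exact extreme σ' hσ'K hex
  push_neg at hex
  have hint : ∀ i ∈ s, 0 < σ' i ∧ σ' i < 1 := by
    intro i hi
    obtain ⟨ha, hb⟩ := hbound i
    obtain ⟨hc, hd⟩ := hex i hi
    exact ⟨ha.lt_of_ne (Ne.symm hc), hb.lt_of_ne hd⟩
  rcases Finset.eq_empty_or_nonempty s with rfl | hsne
  · -- empty set
    simp only [hg, AZ_empty]
    rcases Nat.eq_zero_or_pos k with rfl | hk
    · norm_num
    · have : ¬ ((k:ℤ) + 1 = 0) := by omega
      have h2 : ¬ ((k:ℤ) = 0) := by omega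
      rw [if_neg this, if_neg h2]
      norm_num
  by_cases hpair : ∃ i ∈ s, ∃ j ∈ s, i ≠ j ∧ σ' i ≠ σ' j
  · -- two distinct interior values: exchange argument
    obtain ⟨i, his, j, hjs, hij, hvne⟩ := hpair
    have hjei : j ∈ s.erase i := Finset.mem_erase.2 ⟨fun h => hij h.symm, hjs⟩
    set t : Finset (Fin N) := (s.erase i).erase j with ht
    have hjt : j ∉ t := Finset.notMem_erase j _
    have hseq : s = insert i (insert j t) := by
      rw [ht, Finset.insert_erase hjei, Finset.insert_erase his]
    have hit : i ∉ insert j t := by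
      rw [ht, Finset.insert_erase hjei]
      exact Finset.notMem_erase i s
    have hti : ∀ x ∈ t, x ≠ i ∧ x ≠ j := by
      intro x hx
      rw [ht] at hx
      exact ⟨Finset.ne_of_mem_erase (Finset.mem_of_mem_erase hx),
        Finset.ne_of_mem_erase hx⟩
    set c : ℝ := σ' i + σ' j with hc
    -- the quadratic coefficients
    set a2 : ℝ := AZ t ((k:ℤ) - 2) σ' with ha2
    set a1 : ℝ := AZ t ((k:ℤ) - 1) σ' with ha1
    set a0 : ℝ := AZ t (k:ℤ) σ' with ha0
    set aa : ℝ := AZ t ((k:ℤ) + 1) σ' with haa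
    set W : ℝ := (a1 - 2*a0 + aa) - (a2 - 2*a1 + a0) with hW
    set Y : ℝ := (a0 - aa) - (a1 - a0) with hY
    set Z : ℝ := aa - a0 with hZ
    have hgen : ∀ σ'' : Fin N → ℝ, (∀ x ∈ t, σ'' x = σ' x) →
        g σ'' = (σ'' i * σ'' j) * W + (σ'' i + σ'' j) * Y + Z := by
      intro σ'' hagree
      have hcongr2 : ∀ m : ℤ, AZ t m σ'' = AZ t m σ' := fun m => AZ_congr hagree
      show AZ s ((k:ℤ)+1) σ'' - AZ s (k:ℤ) σ'' = _
      rw [hseq, AZ_pair hit hjt, AZ_pair hit hjt,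
        show (k:ℤ) + 1 - 2 = (k:ℤ) - 1 by ring, show (k:ℤ) + 1 - 1 = (k:ℤ) by ring,
        ]
      simp only [hcongr2]
      rw [hW, hY, hZ, ha2, ha1, ha0, haa]
      ring
    -- feasibility of two-coordinate modifications
    have hsum_upd : ∀ p q : ℝ, p + q = c →
        ∑ x ∈ s, (Function.update (Function.update σ' i p) j q) x = ∑ x ∈ s, σ' x := by
      intro p q hpq
      set σe := Function.update (Function.update σ' i p) j q with hσe
      have hei : σe i = p := by
        rw [hσe, Function.update_of_ne hij, Function.update_self]
      have hej : σe j = q := by rw [hσe, Function.update_self]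
      have het : ∀ x ∈ t, σe x = σ' x := by
        intro x hx
        obtain ⟨hxi, hxj⟩ := hti x hx
        rw [hσe, Function.update_of_ne hxj, Function.update_of_ne hxi]
      rw [hseq, Finset.sum_insert hit, Finset.sum_insert hjt,
        Finset.sum_insert hit, Finset.sum_insert hjt, hei, hej,
        Finset.sum_congr rfl het]
      rw [hc] at hpq
      linarith
    have hupd_t : ∀ p q : ℝ, ∀ x ∈ t, (Function.update (Function.update σ' i p) j q) x = σ' x := by
      intro p q x hx
      obtain ⟨hxi, hxj⟩ := hti x hx
      rw [Function.update_of_ne hxj, Function.update_of_ne hxi]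
    have hupd_i : ∀ p q : ℝ, (Function.update (Function.update σ' i p) j q) i = p := by
      intro p q
      rw [Function.update_of_ne hij, Function.update_self]
    have hupd_j : ∀ p q : ℝ, (Function.update (Function.update σ' i p) j q) j = q := by
      intro p q
      rw [Function.update_self]
    have hupd_mem : ∀ p q : ℝ, p + q = c → 0 ≤ p → p ≤ 1 → 0 ≤ q → q ≤ 1 →
        (Function.update (Function.update σ' i p) j q) ∈ K := by
      intro p q hpq hp0 hp1 hq0 hq1
      refine ⟨Set.mem_Icc.2 ⟨fun x => ?_, fun x => ?_⟩, ?_⟩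
      · simp only [Pi.zero_apply]
        rcases eq_or_ne x j with rfl | hxj
        · rw [hupd_j]; exact hq0
        rcases eq_or_ne x i with rfl | hxi
        · rw [hupd_i]; exact hp0
        · rw [Function.update_of_ne hxj, Function.update_of_ne hxi]
          exact (hbound x).1
      · simp only [Pi.one_apply]
        rcases eq_or_ne x j with rfl | hxj
        · rw [hupd_j]; exact hq1
        rcases eq_or_ne x i with rfl | hxi
        · rw [hupd_i]; exact hp1
        · rw [Function.update_of_ne hxj, Function.update_of_ne hxi]
          exact (hbound x).2
      · show ∑ x ∈ s, _ ≤ (k:ℝ)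
        rw [hsum_upd p q hpq]
        exact hKsum σ' hσ'K
    have hi01 := hint i his
    have hj01 := hint j hjs
    -- the averaged point shows W ≤ 0
    have hWle : W ≤ 0 := by
      have hmem : (Function.update (Function.update σ' i (c/2)) j (c/2)) ∈ K := by
        refine hupd_mem (c/2) (c/2) (by ring) (by rw [hc]; nlinarith [hi01.1, hj01.1])
          (by rw [hc]; nlinarith [hi01.2, hj01.2]) (by rw [hc]; nlinarith [hi01.1, hj01.1])
          (by rw [hc]; nlinarith [hi01.2, hj01.2])
      have hle := hmax _ hmem
      rw [hgen _ (hupd_t (c/2) (c/2)), hgen σ' (fun x _ => rfl)] at hle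
      rw [hupd_i, hupd_j] at hle
      have hdpos : (0:ℝ) < c/2 * (c/2) - σ' i * σ' j := by
        rw [hc]
        have hne0 : σ' i - σ' j ≠ 0 := sub_ne_zero.2 hvne
        have h2 : 0 < (σ' i - σ' j)^2 :=
          lt_of_le_of_ne (sq_nonneg _) (Ne.symm (pow_ne_zero 2 hne0))
        nlinarith [h2]
      nlinarith [hle, hdpos]
    -- the extremal point
    obtain ⟨p, q, hpq, hp0, hp1, hq0, hq1, hext, hlt2⟩ :
        ∃ p q : ℝ, p + q = c ∧ 0 ≤ p ∧ p ≤ 1 ∧ 0 ≤ q ∧ q ≤ 1 ∧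
          (p = 0 ∨ p = 1 ∨ q = 0 ∨ q = 1) ∧ p * q < σ' i * σ' j := by
      rcases le_or_gt c 1 with h | h
      · exact ⟨c, 0, by ring, by rw [hc]; nlinarith [hi01.1, hj01.1], h, le_rfl, zero_le_one,
          Or.inr (Or.inr (Or.inl rfl)), by rw [hc]; nlinarith [hi01.1, hj01.1]⟩
      · refine ⟨1, c - 1, by ring, zero_le_one, le_rfl, by linarith,
          by rw [hc]; nlinarith [hi01.2, hj01.2], Or.inr (Or.inl rfl), ?_⟩
        rw [hc]
        nlinarith [hi01.2, hj01.2]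
    set σe := Function.update (Function.update σ' i p) j q with hσe
    have hmeme : σe ∈ K := hupd_mem p q hpq hp0 hp1 hq0 hq1
    have hgee : g σ' ≤ g σe := by
      rw [hgen σe (hupd_t p q), hgen σ' (fun x _ => rfl)]
      rw [hσe, hupd_i, hupd_j, hpq, hc]
      nlinarith [hWle, hlt2]
    have hgext : g σe ≤ 0 := by
      refine extreme σe hmeme ?_
      rcases hext with h | h | h | h
      · exact ⟨i, his, Or.inl (by rw [hσe, hupd_i, h])⟩
      · exact ⟨i, his, Or.inr (by rw [hσe, hupd_i, h])⟩
      · exact ⟨j, hjs, Or.inl (by rw [hσe, hupd_j, h])⟩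
      · exact ⟨j, hjs, Or.inr (by rw [hσe, hupd_j, h])⟩
    linarith
  · -- all values equal on s : binomial case
    push_neg at hpair
    obtain ⟨i0, hi0⟩ := hsne
    set x : ℝ := σ' i0 with hx
    have heq : ∀ i ∈ s, σ' i = x := by
      intro i hi
      rcases eq_or_ne i i0 with rfl | hne
      · rfl
      · exact hpair i hi i0 hi0 hne
    have hsumx : ∑ i ∈ s, σ' i = (s.card : ℝ) * x := by
      rw [Finset.sum_congr rfl heq, Finset.sum_const, nsmul_eq_mul]
    have hmx : (s.card : ℝ) * x ≤ (k : ℝ) := by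
      rw [← hsumx]; exact hKsum σ' hσ'K
    have hx0 : 0 ≤ x := (hbound i0).1
    have hx1 : x ≤ 1 := (hbound i0).2
    show AZ s ((k:ℤ)+1) σ' - AZ s (k:ℤ) σ' ≤ 0
    have e1 : (k:ℤ) + 1 = ((k+1 : ℕ) : ℤ) := by push_cast; ring
    rw [e1, AZ_binom s σ' heq (k+1), AZ_binom s σ' heq k]
    have := binom_ratio (m := s.card) (k := k) hx0 hx1 hmx
    linarith

lemma down {s : Finset (Fin N)} {k : ℕ} {τ : Fin N → ℝ}
    (h0 : ∀ i ∈ s, 0 ≤ τ i) (h1 : ∀ i ∈ s, τ i ≤ 1) (hsum : ∑ i ∈ s, τ i ≤ (k : ℝ)) :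
    AZ s ((k : ℤ) + 1) τ ≤ AZ s (k : ℤ) τ :=
  core s.card s rfl k τ h0 h1 hsum

lemma up {s : Finset (Fin N)} {k : ℕ} {τ : Fin N → ℝ}
    (h0 : ∀ i ∈ s, 0 ≤ τ i) (h1 : ∀ i ∈ s, τ i ≤ 1) (hsum : (k : ℝ) + 1 ≤ ∑ i ∈ s, τ i) :
    AZ s (k : ℤ) τ ≤ AZ s ((k : ℤ) + 1) τ := by
  have hsumcard : ∑ i ∈ s, τ i ≤ (s.card : ℝ) := by
    calc ∑ i ∈ s, τ i ≤ ∑ _i ∈ s, (1:ℝ) := Finset.sum_le_sum h1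
      _ = (s.card : ℝ) := by rw [Finset.sum_const, nsmul_eq_mul, mul_one]
  have hkcard : k + 1 ≤ s.card := by exact_mod_cast le_trans hsum hsumcard
  set m : ℕ := s.card - (k+1) with hm
  have hmk : s.card - k = m + 1 := by omega
  have hsub : ∑ i ∈ s, (1 - τ i) = (s.card : ℝ) - ∑ i ∈ s, τ i := by
    rw [Finset.sum_sub_distrib, Finset.sum_const, nsmul_eq_mul, mul_one]
  have hr1 : AZ s ((k:ℕ) : ℤ) τ = AZ s ((m + 1 : ℕ) : ℤ) (fun i => 1 - τ i) := by
    rw [AZ_reflect (by omega) τ, hmk]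
  have hr2 : AZ s ((k + 1 : ℕ) : ℤ) τ = AZ s ((m : ℕ) : ℤ) (fun i => 1 - τ i) := by
    rw [AZ_reflect (by omega) τ, hm]
  have hc := core s.card s rfl m (fun i => 1 - τ i)
    (fun i hi => by have := h1 i hi; simp; linarith)
    (fun i hi => by have := h0 i hi; simp; linarith)
    (by
      rw [hsub]
      have : ((m:ℝ)) = (s.card : ℝ) - (k+1) := by
        rw [hm]
        push_cast [Nat.cast_sub hkcard]
        ring
      rw [this]
      linarith)
  have e1 : ((m:ℤ)) + 1 = ((m + 1 : ℕ) : ℤ) := by push_cast; ring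
  rw [e1] at hc
  have e2 : ((k:ℤ)) + 1 = ((k + 1 : ℕ) : ℤ) := by push_cast; ring
  rw [e2, hr1, hr2]
  exact hc

/-- Coefficients of a product of linear factors in terms of `AZ`. -/
lemma bridge (s : Finset (Fin N)) (ρ : Fin N → ℝ) (hρ : ∀ i ∈ s, 0 < ρ i) :
    ∀ j : ℕ, (∏ i ∈ s, (X + C (ρ i))).coeff j
      = (∏ i ∈ s, (1 + ρ i)) * AZ s (j : ℤ) (fun i => 1/(1+ρ i)) := by
  induction s using Finset.induction_on with
  | empty =>
    intro j
    simp only [Finset.prod_empty, AZ_empty]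
    rcases Nat.eq_zero_or_pos j with rfl | hj
    · simp
    · rw [Polynomial.coeff_one, if_neg (by omega), if_neg (by exact_mod_cast (by omega : ¬ (j = 0)))]
      simp
  | @insert i s hi ih =>
    intro j
    have hρi : 0 < ρ i := hρ i (Finset.mem_insert_self _ _)
    have hρs : ∀ x ∈ s, 0 < ρ x := fun x hx => hρ x (Finset.mem_insert_of_mem hx)
    have h1ρ : (1 + ρ i) ≠ 0 := by positivity
    have key : ∀ u v : ℝ, ((1 + ρ i) * ∏ x ∈ s, (1 + ρ x)) *
        ((1/(1+ρ i)) * u + (1 - 1/(1+ρ i)) * v)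
        = (∏ x ∈ s, (1 + ρ x)) * u + ρ i * ((∏ x ∈ s, (1 + ρ x)) * v) := by
      intro u v
      field_simp
      ring
    rw [Finset.prod_insert hi, Finset.prod_insert hi, AZ_insert hi]
    beta_reduce
    have hmul : ((X + C (ρ i)) * ∏ x ∈ s, (X + C (ρ x))).coeff j
        = (X * ∏ x ∈ s, (X + C (ρ x))).coeff j + ρ i * (∏ x ∈ s, (X + C (ρ x))).coeff j := by
      rw [add_mul, Polynomial.coeff_add, Polynomial.coeff_C_mul]
    rw [hmul]
    rcases Nat.eq_zero_or_pos j with rfl | hj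
    · rw [Polynomial.mul_coeff_zero, Polynomial.coeff_X_zero, zero_mul,
        zero_add, ih hρs 0]
      rw [key, show ((0:ℕ):ℤ) - 1 = (-1 : ℤ) by ring, AZ_neg (show (-1:ℤ) < 0 by norm_num)]
      ring
    · obtain ⟨j', rfl⟩ := Nat.exists_eq_succ_of_ne_zero hj.ne'
      rw [Polynomial.coeff_X_mul, ih hρs j', ih hρs (j'+1)]
      rw [key, show ((j'+1:ℕ):ℤ) - 1 = (j' : ℤ) by push_cast; ring]

lemma eval_one_prod (s : Finset (Fin N)) (ρ : Fin N → ℝ) :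
    Polynomial.eval 1 (∏ i ∈ s, (X + C (ρ i))) = ∏ i ∈ s, (1 + ρ i) := by
  rw [Polynomial.eval_prod]
  exact Finset.prod_congr rfl fun i _ => by simp

lemma eval_one_deriv (s : Finset (Fin N)) (ρ : Fin N → ℝ) (hρ : ∀ i ∈ s, (1 + ρ i) ≠ 0) :
    Polynomial.eval 1 (Polynomial.derivative (∏ i ∈ s, (X + C (ρ i))))
      = (∏ i ∈ s, (1 + ρ i)) * ∑ i ∈ s, 1/(1 + ρ i) := by
  induction s using Finset.induction_on with
  | empty => simp
  | @insert i s hi ih =>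
    have hρs : ∀ x ∈ s, (1 + ρ x) ≠ 0 := fun x hx => hρ x (Finset.mem_insert_of_mem hx)
    have hρi := hρ i (Finset.mem_insert_self _ _)
    rw [Finset.prod_insert hi, Polynomial.derivative_mul, Polynomial.eval_add,
      Polynomial.eval_mul, Polynomial.eval_mul, ih hρs,
      Finset.prod_insert hi, Finset.sum_insert hi, eval_one_prod]
    simp only [Polynomial.derivative_add, Polynomial.derivative_X, Polynomial.derivative_C,
      add_zero, Polynomial.eval_one, Polynomial.eval_add, Polynomial.eval_X, Polynomial.eval_C]
    field_simp


end Darroch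

open Darroch

/-- If a polynomial `f` with positive coefficients has all real roots, then its
coefficient sequence is unimodal with mode at `⌊f'(1)/f(1)⌋` or `⌈f'(1)/f(1)⌉`. -/
theorem stmt_19 (f : Polynomial ℝ)
    (hpos : ∀ i ≤ f.natDegree, 0 < f.coeff i)
    (hroots : (f.map (RingHom.id ℝ)).Splits) :
    ∃ k : ℕ,
      (k = ⌊(f.derivative.eval 1) / (f.eval 1)⌋₊ ∨
        k = ⌈(f.derivative.eval 1) / (f.eval 1)⌉₊) ∧
      (∀ i, i < k → f.coeff i ≤ f.coeff (i + 1)) ∧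
      (∀ i, k ≤ i → f.coeff (i + 1) ≤ f.coeff i) := by
  classical
  have h00 : 0 < f.coeff 0 := hpos 0 (Nat.zero_le _)
  have hf0 : f ≠ 0 := fun h => by simp [h] at h00
  have hlc : 0 < f.leadingCoeff := hpos f.natDegree le_rfl
  have hevalpos : ∀ x : ℝ, 0 ≤ x → 0 < f.eval x := by
    intro x hx
    rw [Polynomial.eval_eq_sum_range]
    refine Finset.sum_pos' ?_ ⟨0, Finset.mem_range.2 (Nat.succ_pos _), by simpa using h00⟩
    intro i hi
    have hile : i ≤ f.natDegree := by
      have := Finset.mem_range.1 hi; omega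
    exact mul_nonneg (hpos i hile).le (pow_nonneg hx i)
  have hroots_neg : ∀ r ∈ f.roots, r < 0 := by
    intro r hr
    by_contra h
    push_neg at h
    have h1 : f.eval r = 0 := Polynomial.isRoot_of_mem_roots hr
    have h2 := hevalpos r h
    linarith
  set L : List ℝ := f.roots.toList with hL
  set n : ℕ := L.length with hn
  set ρ : Fin n → ℝ := fun i => -(L.get i) with hρdef
  have hρpos : ∀ i : Fin n, 0 < ρ i := by
    intro i
    have hmem : L.get i ∈ f.roots := by
      have h1 : L.get i ∈ L := L.get_mem i
      exact Multiset.mem_toList.mp h1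
    have := hroots_neg _ hmem
    simp only [hρdef]
    linarith
  set P : Polynomial ℝ := ∏ i : Fin n, (X + C (ρ i)) with hP
  have hfac : f = C f.leadingCoeff * P := by
    have h0 := Polynomial.Splits.eq_prod_roots (f := f) (by simpa using hroots)
    conv_lhs => rw [h0]
    congr 1
    show (f.roots.map fun a => X - C a).prod = ∏ i : Fin n, (X + C (ρ i))
    have h1 : f.roots = (L : Multiset ℝ) := (Multiset.coe_toList f.roots).symm
    rw [h1, Multiset.map_coe, Multiset.prod_coe]
    have h2 : L = List.ofFn L.get := (List.ofFn_get L).symm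
    conv_lhs => rw [h2]
    rw [List.map_ofFn, List.prod_ofFn]
    refine Finset.prod_congr rfl fun i _ => ?_
    simp only [Function.comp_apply, hρdef, map_neg, sub_eq_add_neg]
  set τ : Fin n → ℝ := fun i => 1/(1+ρ i) with hτdef
  have h1ρpos : ∀ i, (0:ℝ) < 1 + ρ i := fun i => by have := hρpos i; linarith
  have hτ0 : ∀ i, 0 ≤ τ i := fun i => by
    have := h1ρpos i; simp only [hτdef]; positivity
  have hτ1 : ∀ i, τ i ≤ 1 := fun i => by
    have h1 := h1ρpos i
    have h2 := hρpos i
    simp only [hτdef]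
    rw [div_le_one h1]
    linarith
  have heval1 : f.eval 1 = f.leadingCoeff * ∏ i, (1+ρ i) := by
    conv_lhs => rw [hfac]
    rw [Polynomial.eval_mul, Polynomial.eval_C, hP, eval_one_prod]
  have heval1pos : 0 < f.eval 1 := hevalpos 1 zero_le_one
  have hcoeff : ∀ j : ℕ, f.coeff j = f.eval 1 * AZ Finset.univ (j:ℤ) τ := by
    intro j
    conv_lhs => rw [hfac]
    rw [Polynomial.coeff_C_mul, hP, bridge Finset.univ ρ (fun i _ => hρpos i) j, heval1, hτdef]
    ring
  have hderiv : f.derivative.eval 1 = f.eval 1 * ∑ i, τ i := by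
    conv_lhs => rw [hfac]
    rw [Polynomial.derivative_C_mul, Polynomial.eval_mul, Polynomial.eval_C, hP,
      eval_one_deriv Finset.univ ρ (fun i _ => (h1ρpos i).ne'), heval1, hτdef]
    ring
  set μ : ℝ := ∑ i, τ i with hμdef
  have hμformula : f.derivative.eval 1 / f.eval 1 = μ := by
    rw [hderiv]
    field_simp
  have hμ0 : 0 ≤ μ := Finset.sum_nonneg fun i _ => hτ0 i
  have hdown : ∀ k : ℕ, μ ≤ (k:ℝ) → f.coeff (k+1) ≤ f.coeff k := by
    intro k hk
    rw [hcoeff, hcoeff]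
    refine mul_le_mul_of_nonneg_left ?_ heval1pos.le
    have hd := down (s := Finset.univ) (k := k) (τ := τ)
      (fun i _ => hτ0 i) (fun i _ => hτ1 i) hk
    rw [show ((k+1:ℕ):ℤ) = (k:ℤ)+1 by push_cast; ring]
    exact hd
  have hup : ∀ k : ℕ, (k:ℝ)+1 ≤ μ → f.coeff k ≤ f.coeff (k+1) := by
    intro k hk
    rw [hcoeff, hcoeff]
    refine mul_le_mul_of_nonneg_left ?_ heval1pos.le
    have hu := up (s := Finset.univ) (k := k) (τ := τ)
      (fun i _ => hτ0 i) (fun i _ => hτ1 i) hk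
    rw [show ((k+1:ℕ):ℤ) = (k:ℤ)+1 by push_cast; ring]
    exact hu
  rw [hμformula]
  by_cases hc : f.coeff (⌊μ⌋₊ + 1) ≤ f.coeff ⌊μ⌋₊
  · refine ⟨⌊μ⌋₊, Or.inl rfl, ?_, ?_⟩
    · intro i hi
      apply hup
      have h1 : (i+1 : ℕ) ≤ ⌊μ⌋₊ := hi
      calc (i:ℝ)+1 = ((i+1:ℕ):ℝ) := by push_cast; ring
        _ ≤ (⌊μ⌋₊:ℝ) := by exact_mod_cast h1
        _ ≤ μ := Nat.floor_le hμ0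
    · intro i hi
      rcases eq_or_lt_of_le hi with rfl | hlt
      · exact hc
      · apply hdown
        have h2 : ⌊μ⌋₊ + 1 ≤ i := hlt
        have h3 := Nat.lt_floor_add_one μ
        calc μ ≤ (⌊μ⌋₊:ℝ)+1 := h3.le
          _ = ((⌊μ⌋₊+1:ℕ):ℝ) := by push_cast; ring
          _ ≤ (i:ℝ) := by exact_mod_cast h2
  · push_neg at hc
    have hflt : (⌊μ⌋₊ : ℝ) < μ := by
      by_contra h
      push_neg at h
      exact absurd (hdown ⌊μ⌋₊ h) (not_le.2 hc)
    have hceil : ⌈μ⌉₊ = ⌊μ⌋₊ + 1 := by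
      have h1 : ⌈μ⌉₊ ≤ ⌊μ⌋₊ + 1 := by
        apply Nat.ceil_le.2
        calc μ ≤ (⌊μ⌋₊:ℝ)+1 := (Nat.lt_floor_add_one μ).le
          _ = ((⌊μ⌋₊+1:ℕ):ℝ) := by push_cast; ring
      have h2 : ⌊μ⌋₊ < ⌈μ⌉₊ := Nat.lt_ceil.2 hflt
      omega
    refine ⟨⌈μ⌉₊, Or.inr rfl, ?_, ?_⟩
    · intro i hi
      rw [hceil] at hi
      rcases (by omega : i < ⌊μ⌋₊ ∨ i = ⌊μ⌋₊) with h | rfl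
      · apply hup
        have h1 : (i+1 : ℕ) ≤ ⌊μ⌋₊ := h
        calc (i:ℝ)+1 = ((i+1:ℕ):ℝ) := by push_cast; ring
          _ ≤ (⌊μ⌋₊:ℝ) := by exact_mod_cast h1
          _ ≤ μ := Nat.floor_le hμ0
      · exact hc.le
    · intro i hi
      apply hdown
      calc μ ≤ (⌈μ⌉₊:ℝ) := Nat.le_ceil μ
        _ ≤ (i:ℝ) := by exact_mod_cast hi
end
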